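/- (Di Nola's representation theorem) Every MV-algebra M can be embedded into a product of ultrapowers of the standard MV-algebra [0,1]: there exist an index set J and, for each j ∈ J, an index set I_j and an ultrafilter U_j on I_j, together with an injective MV-homomorphism from M into the direct product ∏_{j∈J} (([0,1]^{I_j})/U_j). -/

import Mathlib

/-- An MV-algebra structure on a type `A`. -/
structure MVStr (A : Type*) where
  oplus : A → A → A
  neg : A → A
  zero : A
  oplus_comm : ∀ x y, oplus x y = oplus y x
  oplus_assoc : ∀ x y z, oplus x (oplus y z) = oplus (oplus x y) z
  oplus_zero : ∀ x, oplus x zero = x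
  neg_neg : ∀ x, neg (neg x) = x
  oplus_one : ∀ x, oplus x (neg zero) = neg zero
  mv6 : ∀ x y, oplus (neg (oplus (neg x) y)) y = oplus (neg (oplus (neg y) x)) x

namespace MVStr

variable {A : Type*}

/-- The top element `1 := ¬0`. -/
def one (s : MVStr A) : A := s.neg s.zero

/-- The MV-order: `x ≤ y` iff `¬x ⊕ y = 1`. -/
def le (s : MVStr A) (x y : A) : Prop := s.oplus (s.neg x) y = s.one

/-- An MV-algebra is linearly ordered if the MV-order is total. -/
def Linear (s : MVStr A) : Prop := ∀ x y, s.le x y ∨ s.le y x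

end MVStr

/-- `f : A → B` is an MV-homomorphism. -/
def IsMVHom {A B : Type*} (s : MVStr A) (t : MVStr B) (f : A → B) : Prop :=
  (∀ x y, f (s.oplus x y) = t.oplus (f x) (f y)) ∧
  (∀ x, f (s.neg x) = t.neg (f x)) ∧
  f s.zero = t.zero

/-- A partial-subalgebra embedding of the restriction of `s` to `X` into `t`. -/
def IsPartialMVEmbedding {A B : Type*} (s : MVStr A) (t : MVStr B) (X : Set A)
    (f : A → B) : Prop :=
  Set.InjOn f X ∧
  (s.zero ∈ X → f s.zero = t.zero) ∧
  (∀ x ∈ X, s.neg x ∈ X → f (s.neg x) = t.neg (f x)) ∧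
  (∀ x ∈ X, ∀ y ∈ X, s.oplus x y ∈ X → f (s.oplus x y) = t.oplus (f x) (f y))

/-- The direct product of MV-algebras, with componentwise operations. -/
def piMV {I : Type*} {A : I → Type*} (s : ∀ i, MVStr (A i)) : MVStr (∀ i, A i) where
  oplus x y := fun i => (s i).oplus (x i) (y i)
  neg x := fun i => (s i).neg (x i)
  zero := fun i => (s i).zero
  oplus_comm x y := funext fun i => (s i).oplus_comm _ _
  oplus_assoc x y z := funext fun i => (s i).oplus_assoc _ _ _
  oplus_zero x := funext fun i => (s i).oplus_zero _
  neg_neg x := funext fun i => (s i).neg_neg _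
  oplus_one x := funext fun i => (s i).oplus_one _
  mv6 x y := funext fun i => (s i).mv6 _ _

/-- The setoid identifying two elements of a direct product when they agree on a
set belonging to the ultrafilter `U`. -/
def mvSetoid {I : Type*} (A : I → Type*) (U : Ultrafilter I) : Setoid (∀ i, A i) where
  r x y := {i | x i = y i} ∈ (U : Filter I)
  iseqv := by
    refine ⟨fun x => ?_, fun {x y} h => ?_, fun {x y z} h1 h2 => ?_⟩
    · have : {i | x i = x i} = Set.univ := Set.eq_univ_of_forall fun i => rfl
      rw [this]; exact Filter.univ_mem
    · have : {i | x i = y i} ⊆ {i | y i = x i} := fun i hi => (hi : x i = y i).symm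
      exact Filter.mem_of_superset h this
    · refine Filter.mem_of_superset (Filter.inter_mem h1 h2) ?_
      rintro i ⟨hi1, hi2⟩
      exact (hi1 : x i = y i).trans hi2

/-- The carrier of the ultraproduct of the family `A` modulo the ultrafilter `U`. -/
def MVUltra {I : Type*} (A : I → Type*) (U : Ultrafilter I) : Type _ :=
  Quotient (mvSetoid A U)

/-- The ultraproduct of a family of MV-algebras modulo an ultrafilter `U`. -/
def ultraMV {I : Type*} {A : I → Type*} (s : ∀ i, MVStr (A i)) (U : Ultrafilter I) :
    MVStr (MVUltra A U) where
  oplus := Quotient.map₂ (fun x y => fun i => (s i).oplus (x i) (y i)) (by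
    intro a c hac b d hbd
    change {i | a i = c i} ∈ (U : Filter I) at hac
    change {i | b i = d i} ∈ (U : Filter I) at hbd
    refine Filter.mem_of_superset (Filter.inter_mem hac hbd) ?_
    rintro i ⟨hi1, hi2⟩
    show (s i).oplus (a i) (b i) = (s i).oplus (c i) (d i)
    rw [show a i = c i from hi1, show b i = d i from hi2])
  neg := Quotient.map (fun x => fun i => (s i).neg (x i)) (by
    intro a b hab
    change {i | a i = b i} ∈ (U : Filter I) at hab
    refine Filter.mem_of_superset hab ?_
    intro i hi
    show (s i).neg (a i) = (s i).neg (b i)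
    rw [show a i = b i from hi])
  zero := Quotient.mk (mvSetoid A U) (fun i => (s i).zero)
  oplus_comm := by
    intro x y
    refine Quotient.inductionOn₂ x y ?_
    intro a b
    simp only [Quotient.map_mk, Quotient.map₂_mk]
    exact congrArg _ (funext fun i => (s i).oplus_comm _ _)
  oplus_assoc := by
    intro x y z
    refine Quotient.inductionOn₃ x y z ?_
    intro a b c
    simp only [Quotient.map_mk, Quotient.map₂_mk]
    exact congrArg _ (funext fun i => (s i).oplus_assoc _ _ _)
  oplus_zero := by
    intro x
    refine Quotient.inductionOn x ?_
    intro a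
    simp only [Quotient.map_mk, Quotient.map₂_mk]
    exact congrArg _ (funext fun i => (s i).oplus_zero _)
  neg_neg := by
    intro x
    refine Quotient.inductionOn x ?_
    intro a
    simp only [Quotient.map_mk, Quotient.map₂_mk]
    exact congrArg _ (funext fun i => (s i).neg_neg _)
  oplus_one := by
    intro x
    refine Quotient.inductionOn x ?_
    intro a
    simp only [Quotient.map_mk, Quotient.map₂_mk]
    exact congrArg _ (funext fun i => (s i).oplus_one _)
  mv6 := by
    intro x y
    refine Quotient.inductionOn₂ x y ?_
    intro a b
    simp only [Quotient.map_mk, Quotient.map₂_mk]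
    exact congrArg _ (funext fun i => (s i).mv6 _ _)

/-- The MV-algebra structure on a suitable subset of a linearly ordered field,
with `x ⊕ y = min (x + y) 1` and `¬x = 1 - x`. -/
def subMV {K : Type*} [Field K] [LinearOrder K] [IsStrictOrderedRing K] (S : Set K)
    (hsub : ∀ x ∈ S, 0 ≤ x ∧ x ≤ 1)
    (h0 : (0 : K) ∈ S)
    (hneg : ∀ x ∈ S, 1 - x ∈ S)
    (hop : ∀ x ∈ S, ∀ y ∈ S, min (x + y) 1 ∈ S) : MVStr S where
  oplus x y := ⟨min (x.1 + y.1) 1, hop _ x.2 _ y.2⟩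
  neg x := ⟨1 - x.1, hneg _ x.2⟩
  zero := ⟨0, h0⟩
  oplus_comm x y := Subtype.ext (by dsimp only; rw [add_comm])
  oplus_assoc x y z := Subtype.ext (by
    obtain ⟨hx0, hx1⟩ := hsub _ x.2
    obtain ⟨hy0, hy1⟩ := hsub _ y.2
    obtain ⟨hz0, hz1⟩ := hsub _ z.2
    dsimp only
    simp only [min_def]
    split_ifs <;> linarith)
  oplus_zero x := Subtype.ext (by
    obtain ⟨hx0, hx1⟩ := hsub _ x.2
    dsimp only
    rw [add_zero, min_eq_left hx1])
  neg_neg x := Subtype.ext (by dsimp only; ring)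
  oplus_one x := Subtype.ext (by
    obtain ⟨hx0, hx1⟩ := hsub _ x.2
    dsimp only
    rw [sub_zero, min_eq_right (by linarith)])
  mv6 x y := Subtype.ext (by
    obtain ⟨hx0, hx1⟩ := hsub _ x.2
    obtain ⟨hy0, hy1⟩ := hsub _ y.2
    dsimp only
    simp only [min_def]
    split_ifs <;> linarith)

/-- The standard MV-algebra on the real interval `[0,1]`. -/
noncomputable def stdMV : MVStr (Set.Icc (0 : ℝ) 1) :=
  subMV _ (fun _ hx => ⟨hx.1, hx.2⟩) ⟨le_refl 0, zero_le_one⟩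
    (fun x hx => ⟨by linarith [hx.2], by linarith [hx.1]⟩)
    (fun x hx y hy => ⟨le_min (add_nonneg hx.1 hy.1) zero_le_one, min_le_right _ _⟩)

/-- The rational standard MV-algebra on `ℚ ∩ [0,1]`. -/
def ratMV : MVStr (Set.Icc (0 : ℚ) 1) :=
  subMV _ (fun _ hx => ⟨hx.1, hx.2⟩) ⟨le_refl 0, zero_le_one⟩
    (fun x hx => ⟨by linarith [hx.2], by linarith [hx.1]⟩)
    (fun x hx y hy => ⟨le_min (add_nonneg hx.1 hy.1) zero_le_one, min_le_right _ _⟩)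

/-- The carrier `{0, 1/k, 2/k, …, 1}` of the finite MV-chain `Ł_k`. -/
def Lset (k : ℕ) : Set ℚ := {q | ∃ i : ℕ, i ≤ k ∧ q = (i : ℚ) / k}

/-- The finite MV-chain `Ł_k` on `{0, 1/k, 2/k, …, 1}` (for `k ≥ 1`). -/
def LMV (k : ℕ) (hk : 1 ≤ k) : MVStr (Lset k) := by
  have hk0 : (0 : ℚ) < (k : ℚ) := by exact_mod_cast hk
  refine subMV _ ?_ ?_ ?_ ?_
  · rintro x ⟨i, hik, rfl⟩
    exact ⟨div_nonneg (by positivity) hk0.le, (div_le_one hk0).2 (by exact_mod_cast hik)⟩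
  · exact ⟨0, Nat.zero_le _, by simp⟩
  · rintro x ⟨i, hik, rfl⟩
    refine ⟨k - i, Nat.sub_le _ _, ?_⟩
    rw [Nat.cast_sub hik]
    field_simp
  · rintro x ⟨i, hik, rfl⟩ y ⟨j, hjk, rfl⟩
    refine ⟨min (i + j) k, min_le_right _ _, ?_⟩
    rw [← add_div]
    rcases le_total (i + j) k with h | h
    · rw [min_eq_left h, min_eq_left ((div_le_one hk0).2 (by exact_mod_cast h))]
      push_cast
      ring
    · rw [min_eq_right h, min_eq_right ((one_le_div hk0).2 (by exact_mod_cast h))]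
      field_simp

/-- `U` is an `α`-regular (ultra)filter. -/
def IsRegularUltrafilter {I : Type*} (α : Cardinal) (U : Ultrafilter I) : Prop :=
  ∃ E : Set (Set I), (∀ e ∈ E, e ∈ (U : Filter I)) ∧ Cardinal.mk E = α ∧
    ∀ i : I, {e : E | i ∈ (e : Set I)}.Finite


section ToolKit

namespace MVStr

variable {A : Type*} (s : MVStr A)

/-- `x ⊖ y := ¬(¬x ⊕ y)`. -/
def om (x y : A) : A := s.neg (s.oplus (s.neg x) y)

/-- join -/
def sup (x y : A) : A := s.oplus (s.om x y) y

/-- meet -/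
def inf (x y : A) : A := s.neg (s.sup (s.neg x) (s.neg y))

lemma neg_inj {x y : A} (h : s.neg x = s.neg y) : x = y := by
  rw [← s.neg_neg x, h, s.neg_neg]

lemma oplus_one' (x : A) : s.oplus x s.one = s.one := s.oplus_one x

lemma one_oplus (x : A) : s.oplus s.one x = s.one := by
  rw [s.oplus_comm]; exact s.oplus_one x

lemma zero_oplus (x : A) : s.oplus s.zero x = x := by
  rw [s.oplus_comm]; exact s.oplus_zero x

lemma neg_one : s.neg s.one = s.zero := s.neg_neg s.zero

lemma neg_oplus_self (x : A) : s.oplus (s.neg x) x = s.one := by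
  have h := s.mv6 x s.one
  rw [s.oplus_one', s.neg_one, s.zero_oplus] at h
  exact h.symm

lemma oplus_neg_self (x : A) : s.oplus x (s.neg x) = s.one := by
  rw [s.oplus_comm]; exact s.neg_oplus_self x

lemma le_refl (x : A) : s.le x x := s.neg_oplus_self x

lemma le_antisymm {x y : A} (h1 : s.le x y) (h2 : s.le y x) : x = y := by
  have h := s.mv6 x y
  rw [h1, h2, s.neg_one, s.zero_oplus, s.zero_oplus] at h
  exact h.symm

lemma sup_comm (x y : A) : s.sup x y = s.sup y x := s.mv6 x y

lemma sup_of_le {x y : A} (h : s.le x y) : s.sup x y = y := by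
  show s.oplus (s.neg (s.oplus (s.neg x) y)) y = y
  rw [h, s.neg_one, s.zero_oplus]

lemma le_trans {x y z : A} (h1 : s.le x y) (h2 : s.le y z) : s.le x z := by
  have hz : s.oplus (s.neg (s.oplus (s.neg z) y)) y = z := by
    have h3 := (s.sup_comm y z).symm.trans (s.sup_of_le h2)
    exact h3
  show s.oplus (s.neg x) z = s.one
  rw [← hz, s.oplus_comm (s.neg (s.oplus (s.neg z) y)) y, s.oplus_assoc, h1, s.one_oplus]

lemma le_oplus_left (x y : A) : s.le x (s.oplus x y) := by
  show s.oplus (s.neg x) (s.oplus x y) = s.one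
  rw [s.oplus_assoc, s.neg_oplus_self, s.one_oplus]

lemma le_oplus_right (x y : A) : s.le x (s.oplus y x) := by
  rw [s.oplus_comm]; exact s.le_oplus_left x y

lemma zero_le (x : A) : s.le s.zero x := by
  show s.oplus (s.neg s.zero) x = s.one
  exact s.one_oplus x

lemma le_one (x : A) : s.le x s.one := s.oplus_one' (s.neg x)

lemma cancel_helper (P Q : A) : s.oplus (s.neg Q) (s.oplus P Q) = s.one := by
  rw [s.oplus_comm P Q, s.oplus_assoc, s.neg_oplus_self, s.one_oplus]

lemma oplus_le_oplus_left {x y : A} (h : s.le x y) (z : A) :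
    s.le (s.oplus x z) (s.oplus y z) := by
  have hy : s.oplus (s.neg (s.oplus (s.neg y) x)) x = y := by
    have h1 : s.sup x y = y := s.sup_of_le h
    rw [s.sup_comm] at h1; exact h1
  show s.oplus (s.neg (s.oplus x z)) (s.oplus y z) = s.one
  rw [← hy, ← s.oplus_assoc (s.neg (s.oplus (s.neg y) x)) x z]
  exact s.cancel_helper _ _

lemma oplus_le_oplus_right {x y : A} (h : s.le x y) (z : A) :
    s.le (s.oplus z x) (s.oplus z y) := by
  rw [s.oplus_comm z x, s.oplus_comm z y]; exact s.oplus_le_oplus_left h z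

lemma oplus_le_oplus {a a' b b' : A} (ha : s.le a a') (hb : s.le b b') :
    s.le (s.oplus a b) (s.oplus a' b') :=
  s.le_trans (s.oplus_le_oplus_left ha b) (s.oplus_le_oplus_right hb a')

lemma neg_le_neg {x y : A} (h : s.le x y) : s.le (s.neg y) (s.neg x) := by
  show s.oplus (s.neg (s.neg y)) (s.neg x) = s.one
  rw [s.neg_neg, s.oplus_comm]; exact h

lemma om_eq_zero_iff {x y : A} : s.om x y = s.zero ↔ s.le x y := by
  constructor
  · intro h
    have h2 : s.neg (s.om x y) = s.neg s.zero := by rw [h]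
    show s.oplus (s.neg x) y = s.one
    rw [← s.neg_neg (s.oplus (s.neg x) y)]
    exact h2
  · intro h
    show s.neg (s.oplus (s.neg x) y) = s.zero
    rw [h, s.neg_one]

lemma le_sup_right (x y : A) : s.le y (s.sup x y) := s.le_oplus_right y (s.om x y)

lemma le_sup_left (x y : A) : s.le x (s.sup x y) := by
  rw [s.sup_comm]; exact s.le_sup_right y x

lemma om_le_om_left {x x' : A} (h : s.le x x') (y : A) : s.le (s.om x y) (s.om x' y) :=
  s.neg_le_neg (s.oplus_le_oplus_left (s.neg_le_neg h) y)

lemma sup_le {x y z : A} (hx : s.le x z) (hy : s.le y z) : s.le (s.sup x y) z := by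
  have a3 : s.le (s.sup x y) (s.sup z y) := s.oplus_le_oplus_left (s.om_le_om_left hx y) y
  have a4 : s.sup z y = z := by rw [s.sup_comm]; exact s.sup_of_le hy
  rw [a4] at a3; exact a3

lemma om_le_iff {x y z : A} : s.le (s.om x y) z ↔ s.le x (s.oplus y z) := by
  constructor
  · intro h
    have b1 := s.le_sup_left x y
    have b2 : s.le (s.sup x y) (s.oplus z y) := s.oplus_le_oplus_left h y
    have b3 := s.le_trans b1 b2
    rwa [s.oplus_comm z y] at b3
  · intro h
    have c2 : s.le (s.om x y) (s.om (s.oplus y z) y) := s.om_le_om_left h y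
    have c3 : s.le (s.om (s.oplus y z) y) z := by
      show s.oplus (s.neg (s.om (s.oplus y z) y)) z = s.one
      rw [show s.neg (s.om (s.oplus y z) y) = s.oplus (s.neg (s.oplus y z)) y from
        s.neg_neg _, ← s.oplus_assoc]
      exact s.neg_oplus_self (s.oplus y z)
    exact s.le_trans c2 c3

lemma om_self (x : A) : s.om x x = s.zero := s.om_eq_zero_iff.mpr (s.le_refl x)

lemma inf_comm (x y : A) : s.inf x y = s.inf y x := congrArg s.neg (s.sup_comm _ _)

lemma inf_le_left (x y : A) : s.le (s.inf x y) x := by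
  have h2 := s.neg_le_neg (s.le_sup_left (s.neg x) (s.neg y))
  rwa [s.neg_neg] at h2

lemma inf_le_right (x y : A) : s.le (s.inf x y) y := by
  have h2 := s.neg_le_neg (s.le_sup_right (s.neg x) (s.neg y))
  rwa [s.neg_neg] at h2

lemma le_inf {x y z : A} (h1 : s.le z x) (h2 : s.le z y) : s.le z (s.inf x y) := by
  have h3 := s.neg_le_neg (s.sup_le (s.neg_le_neg h1) (s.neg_le_neg h2))
  rwa [s.neg_neg] at h3

lemma inf_of_le {x y : A} (h : s.le x y) : s.inf x y = x :=
  s.le_antisymm (s.inf_le_left x y) (s.le_inf (s.le_refl x) h)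

lemma inf_le_inf {a a' b b' : A} (ha : s.le a a') (hb : s.le b b') :
    s.le (s.inf a b) (s.inf a' b') :=
  s.le_inf (s.le_trans (s.inf_le_left a b) ha) (s.le_trans (s.inf_le_right a b) hb)

lemma inf_eq_om (x y : A) : s.inf x y = s.om y (s.om y x) := by
  show s.neg (s.oplus (s.neg (s.oplus (s.neg (s.neg x)) (s.neg y))) (s.neg y)) = _
  rw [s.neg_neg x, s.oplus_comm x (s.neg y), s.oplus_comm (s.neg (s.oplus (s.neg y) x)) (s.neg y)]
  rfl

lemma inf_eq_om' (x y : A) : s.inf x y = s.om x (s.om x y) := by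
  rw [s.inf_comm]; exact s.inf_eq_om y x

lemma oplus_inf (x y z : A) : s.oplus x (s.inf y z) = s.inf (s.oplus x y) (s.oplus x z) := by
  apply s.le_antisymm
  · exact s.le_inf (s.oplus_le_oplus_right (s.inf_le_left y z) x)
      (s.oplus_le_oplus_right (s.inf_le_right y z) x)
  · have h1 : s.le (s.inf (s.oplus x y) (s.oplus x z))
        (s.oplus x (s.om (s.inf (s.oplus x y) (s.oplus x z)) x)) :=
      s.om_le_iff.mp (s.le_refl _)
    have h2 : s.le (s.om (s.inf (s.oplus x y) (s.oplus x z)) x) y :=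
      s.le_trans (s.om_le_om_left (s.inf_le_left _ _) x) (s.om_le_iff.mpr (s.le_refl _))
    have h3 : s.le (s.om (s.inf (s.oplus x y) (s.oplus x z)) x) z :=
      s.le_trans (s.om_le_om_left (s.inf_le_right _ _) x) (s.om_le_iff.mpr (s.le_refl _))
    exact s.le_trans h1 (s.oplus_le_oplus_right (s.le_inf h2 h3) x)

lemma om_oplus (p q : A) : s.om (s.oplus p q) p = s.inf q (s.neg p) := by
  have hw : s.oplus p (s.inf q (s.neg p)) = s.oplus p q := by
    rw [s.oplus_inf p q (s.neg p), s.oplus_neg_self, s.inf_of_le (s.le_one _)]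
  rw [← hw]
  show s.neg (s.oplus (s.neg (s.oplus p (s.inf q (s.neg p)))) p) = s.inf q (s.neg p)
  have h1 : s.neg (s.oplus p (s.inf q (s.neg p))) = s.om (s.neg p) (s.inf q (s.neg p)) := by
    show _ = s.neg (s.oplus (s.neg (s.neg p)) _)
    rw [s.neg_neg]
  rw [h1, s.oplus_comm (s.om (s.neg p) (s.inf q (s.neg p))) p]
  have h2 : s.neg (s.oplus p (s.om (s.neg p) (s.inf q (s.neg p)))) =
      s.om (s.neg p) (s.om (s.neg p) (s.inf q (s.neg p))) := by
    show _ = s.neg (s.oplus (s.neg (s.neg p)) _)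
    rw [s.neg_neg]
  rw [h2, ← s.inf_eq_om (s.inf q (s.neg p)) (s.neg p)]
  exact s.inf_of_le (s.inf_le_right q (s.neg p))

lemma sup_om (x y : A) : s.om (s.sup x y) y = s.om x y := by
  apply s.le_antisymm
  · have h1 : s.sup x y = s.oplus y (s.om x y) := s.oplus_comm _ _
    rw [h1, s.om_oplus y (s.om x y)]
    exact s.inf_le_left _ _
  · exact s.om_le_om_left (s.le_sup_left x y) y

lemma neg_inf_eq {x w : A} (h : s.le x w) : s.oplus (s.neg w) (s.om w x) = s.neg x := by
  have h2 : s.neg (s.inf x w) = s.neg x := by rw [s.inf_of_le h]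
  rw [s.inf_eq_om] at h2
  rw [show s.neg (s.om w (s.om w x)) = s.oplus (s.neg w) (s.om w x) from s.neg_neg _] at h2
  exact h2

lemma om_om (x y : A) : s.om (s.om x y) (s.om y x) = s.om x y := by
  have hx : s.le x (s.sup x y) := s.le_sup_left x y
  have e1 : s.om x y = s.om (s.sup x y) y := (s.sup_om x y).symm
  have e2 : s.om y x = s.om (s.sup x y) x := by rw [← s.sup_om y x, s.sup_comm y x]
  rw [e1, e2]
  show s.neg (s.oplus (s.neg (s.om (s.sup x y) y)) (s.om (s.sup x y) x)) = _
  rw [show s.neg (s.om (s.sup x y) y) = s.oplus (s.neg (s.sup x y)) y from s.neg_neg _,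
    s.oplus_comm (s.neg (s.sup x y)) y,
    ← s.oplus_assoc y (s.neg (s.sup x y)) (s.om (s.sup x y) x), s.neg_inf_eq hx,
    s.sup_om x y]
  show s.neg (s.oplus y (s.neg x)) = s.neg (s.oplus (s.neg x) y)
  rw [s.oplus_comm]

lemma inf_om_om_self (x y : A) : s.inf (s.om x y) (s.om y x) = s.zero := by
  rw [s.inf_eq_om', s.om_om x y]
  exact s.om_self _

lemma inf_oplus_le (a p q : A) :
    s.le (s.inf a (s.oplus p q)) (s.oplus (s.inf a p) (s.inf a q)) := by
  have e : s.oplus (s.inf a p) (s.inf a q) =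
      s.inf (s.oplus (s.inf a p) a) (s.oplus (s.inf a p) q) := s.oplus_inf _ _ _
  rw [e]
  apply s.le_inf
  · rw [s.oplus_comm (s.inf a p) a, s.oplus_inf a a p]
    apply s.le_inf
    · exact s.le_trans (s.inf_le_left _ _) (s.le_oplus_left a a)
    · exact s.le_trans (s.inf_le_left _ _) (s.le_oplus_left a p)
  · rw [s.oplus_comm (s.inf a p) q, s.oplus_inf q a p]
    apply s.le_inf
    · exact s.le_trans (s.inf_le_left _ _) (s.le_oplus_right a q)
    · exact s.le_trans (s.inf_le_right _ _) (by rw [s.oplus_comm p q]; exact s.le_refl _)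

/-- `n`-fold `⊕`. -/
def nsm : ℕ → A → A
  | 0, _ => s.zero
  | n + 1, a => s.oplus a (nsm n a)

lemma nsm_zero (a : A) : s.nsm 0 a = s.zero := rfl

lemma nsm_succ (n : ℕ) (a : A) : s.nsm (n + 1) a = s.oplus a (s.nsm n a) := rfl

lemma nsm_add (m n : ℕ) (a : A) : s.nsm (m + n) a = s.oplus (s.nsm m a) (s.nsm n a) := by
  induction m with
  | zero => rw [Nat.zero_add, s.nsm_zero, s.zero_oplus]
  | succ k ih =>
      rw [show k + 1 + n = (k + n) + 1 from by omega, s.nsm_succ, ih, s.nsm_succ,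
        s.oplus_assoc]

lemma inf_nsm_zero {a b : A} (h : s.inf a b = s.zero) (n : ℕ) :
    s.inf a (s.nsm n b) = s.zero := by
  induction n with
  | zero =>
      exact s.le_antisymm (s.inf_le_right a _) (s.zero_le _)
  | succ k ih =>
      rw [s.nsm_succ]
      have h1 := s.inf_oplus_le a b (s.nsm k b)
      rw [h, ih, s.oplus_zero] at h1
      exact s.le_antisymm h1 (s.zero_le _)

lemma inf_nsm_nsm {a b : A} (h : s.inf a b = s.zero) (m n : ℕ) :
    s.inf (s.nsm m a) (s.nsm n b) = s.zero := by
  have h1 : s.inf (s.nsm n b) a = s.zero := by rw [s.inf_comm]; exact s.inf_nsm_zero h n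
  have h2 := s.inf_nsm_zero h1 m
  rw [s.inf_comm] at h2
  exact h2

/-- Chang distance. -/
def dd (x y : A) : A := s.oplus (s.om x y) (s.om y x)

lemma om_triangle (x y z : A) :
    s.le (s.om x z) (s.oplus (s.om x y) (s.om y z)) := by
  apply s.om_le_iff.mpr
  have b1 := s.le_sup_left x y
  have b2 : s.le (s.sup x y) (s.oplus (s.om x y) (s.oplus (s.om y z) z)) :=
    s.oplus_le_oplus_right (s.le_sup_left y z) (s.om x y)
  have b4 := s.le_trans b1 b2
  rwa [s.oplus_assoc, s.oplus_comm (s.oplus (s.om x y) (s.om y z)) z] at b4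

lemma dd_self (x : A) : s.dd x x = s.zero := by
  show s.oplus (s.om x x) (s.om x x) = s.zero
  rw [s.om_self, s.oplus_zero]

lemma dd_comm (x y : A) : s.dd x y = s.dd y x := s.oplus_comm _ _

lemma eq_of_dd_zero {x y : A} (h : s.dd x y = s.zero) : x = y := by
  have h1 : s.le (s.om x y) s.zero := by
    have := s.le_oplus_left (s.om x y) (s.om y x); rwa [show s.oplus (s.om x y) (s.om y x) = s.dd x y from rfl, h] at this
  have h2 : s.le (s.om y x) s.zero := by
    have := s.le_oplus_right (s.om y x) (s.om x y); rwa [show s.oplus (s.om x y) (s.om y x) = s.dd x y from rfl, h] at this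
  have e1 : s.om x y = s.zero := s.le_antisymm h1 (s.zero_le _)
  have e2 : s.om y x = s.zero := s.le_antisymm h2 (s.zero_le _)
  exact s.le_antisymm (s.om_eq_zero_iff.mp e1) (s.om_eq_zero_iff.mp e2)

lemma oplus_ac (a b c d : A) :
    s.oplus (s.oplus a b) (s.oplus c d) = s.oplus (s.oplus a d) (s.oplus b c) := by
  rw [← s.oplus_assoc a b (s.oplus c d), ← s.oplus_assoc a d (s.oplus b c)]
  congr 1
  rw [s.oplus_assoc b c d, s.oplus_comm (s.oplus b c) d]

lemma dd_triangle (x y z : A) : s.le (s.dd x z) (s.oplus (s.dd x y) (s.dd y z)) := by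
  have c1 := s.om_triangle x y z
  have c2 := s.om_triangle z y x
  have c3 : s.le (s.dd x z)
      (s.oplus (s.oplus (s.om x y) (s.om y z)) (s.oplus (s.om z y) (s.om y x))) :=
    s.oplus_le_oplus c1 c2
  have e := s.oplus_ac (s.om x y) (s.om y z) (s.om z y) (s.om y x)
  refine s.le_trans c3 ?_
  rw [e]
  exact s.le_refl _

lemma om_oplus_le (x y u : A) : s.le (s.om (s.oplus x u) (s.oplus y u)) (s.om x y) := by
  apply s.om_le_iff.mpr
  have h1 : s.le (s.oplus x u) (s.oplus (s.oplus (s.om x y) y) u) :=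
    s.oplus_le_oplus_left (s.le_sup_left x y) u
  refine s.le_trans h1 ?_
  rw [← s.oplus_assoc (s.om x y) y u, s.oplus_comm (s.om x y) (s.oplus y u)]
  exact s.le_refl _

lemma dd_oplus_le (x y u : A) : s.le (s.dd (s.oplus x u) (s.oplus y u)) (s.dd x y) :=
  s.oplus_le_oplus (s.om_oplus_le x y u) (s.om_oplus_le y x u)

lemma dd_neg (x y : A) : s.dd (s.neg x) (s.neg y) = s.dd x y := by
  have e1 : s.om (s.neg x) (s.neg y) = s.om y x := by
    show s.neg (s.oplus (s.neg (s.neg x)) (s.neg y)) = s.neg (s.oplus (s.neg y) x)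
    rw [s.neg_neg, s.oplus_comm]
  have e2 : s.om (s.neg y) (s.neg x) = s.om x y := by
    show s.neg (s.oplus (s.neg (s.neg y)) (s.neg x)) = s.neg (s.oplus (s.neg x) y)
    rw [s.neg_neg, s.oplus_comm]
  show s.oplus (s.om (s.neg x) (s.neg y)) (s.om (s.neg y) (s.neg x)) = _
  rw [e1, e2]
  exact s.oplus_comm _ _

lemma om_one (x : A) : s.om x s.one = s.zero := s.om_eq_zero_iff.mpr (s.le_one x)

lemma one_om (x : A) : s.om s.one x = s.neg x := by
  show s.neg (s.oplus (s.neg s.one) x) = s.neg x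
  rw [s.neg_one, s.zero_oplus]

lemma dd_one (x : A) : s.dd x s.one = s.neg x := by
  show s.oplus (s.om x s.one) (s.om s.one x) = s.neg x
  rw [s.om_one, s.one_om, s.zero_oplus]

end MVStr

end ToolKit
section Ideals

namespace MVStr

variable {A : Type*} (s : MVStr A)

lemma oplus_ac2 (a b c d : A) :
    s.oplus (s.oplus a b) (s.oplus c d) = s.oplus (s.oplus a c) (s.oplus b d) := by
  rw [s.oplus_ac a b c d, s.oplus_ac a d b c, s.oplus_comm d b]

def IsIdeal (P : Set A) : Prop :=
  s.zero ∈ P ∧ (∀ x ∈ P, ∀ y ∈ P, s.oplus x y ∈ P) ∧ ∀ x ∈ P, ∀ y, s.le y x → y ∈ P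

def genIdeal (P : Set A) (a : A) : Set A :=
  {z | ∃ b ∈ P, ∃ n, s.le z (s.oplus b (s.nsm n a))}

lemma genIdeal_isIdeal {P : Set A} (hP : s.IsIdeal P) (a : A) :
    s.IsIdeal (s.genIdeal P a) := by
  refine ⟨⟨s.zero, hP.1, 0, ?_⟩, ?_, ?_⟩
  · rw [s.nsm_zero, s.oplus_zero]; exact s.le_refl _
  · rintro x ⟨b1, hb1, m, hm⟩ y ⟨b2, hb2, n, hn⟩
    refine ⟨s.oplus b1 b2, hP.2.1 b1 hb1 b2 hb2, m + n, ?_⟩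
    refine s.le_trans (s.oplus_le_oplus hm hn) ?_
    rw [s.nsm_add, s.oplus_ac2 b1 (s.nsm m a) b2 (s.nsm n a)]
    exact s.le_refl _
  · rintro x ⟨b, hb, n, hn⟩ y hy
    exact ⟨b, hb, n, s.le_trans hy hn⟩

lemma subset_genIdeal {P : Set A} (a : A) : P ⊆ s.genIdeal P a := fun z hz =>
  ⟨z, hz, 0, by rw [s.nsm_zero, s.oplus_zero]; exact s.le_refl _⟩

lemma self_mem_genIdeal {P : Set A} (hP : s.IsIdeal P) (a : A) : a ∈ s.genIdeal P a := by
  refine ⟨s.zero, hP.1, 1, ?_⟩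
  rw [s.nsm_succ, s.nsm_zero, s.oplus_zero, s.zero_oplus]
  exact s.le_refl _

theorem exists_prime {z : A} (hz : z ≠ s.zero) :
    ∃ P : Set A, s.IsIdeal P ∧ z ∉ P ∧ ∀ x y, s.om x y ∈ P ∨ s.om y x ∈ P := by
  classical
  set S : Set (Set A) := {P | s.IsIdeal P ∧ z ∉ P} with hS
  have h0 : {s.zero} ∈ S := by
    refine ⟨⟨rfl, ?_, ?_⟩, ?_⟩
    · intro x hx y hy
      simp only [Set.mem_singleton_iff] at hx hy ⊢
      rw [hx, hy, s.oplus_zero]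
    · intro x hx y hy
      simp only [Set.mem_singleton_iff] at hx ⊢
      rw [hx] at hy
      exact s.le_antisymm hy (s.zero_le y)
    · simpa using hz
  have hchain : ∀ c ⊆ S, IsChain (· ⊆ ·) c → c.Nonempty →
      ∃ ub ∈ S, ∀ t ∈ c, t ⊆ ub := by
    intro c hcS hch hcne
    refine ⟨⋃₀ c, ⟨⟨?_, ?_, ?_⟩, ?_⟩, fun t ht => Set.subset_sUnion_of_mem ht⟩
    · obtain ⟨t, ht⟩ := hcne
      exact ⟨t, ht, (hcS ht).1.1⟩
    · rintro x ⟨t1, ht1, hx⟩ y ⟨t2, ht2, hy⟩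
      rcases hch.total ht1 ht2 with h | h
      · exact ⟨t2, ht2, (hcS ht2).1.2.1 x (h hx) y hy⟩
      · exact ⟨t1, ht1, (hcS ht1).1.2.1 x hx y (h hy)⟩
    · rintro x ⟨t, ht, hx⟩ y hy
      exact ⟨t, ht, (hcS ht).1.2.2 x hx y hy⟩
    · rintro ⟨t, ht, hzt⟩
      exact (hcS ht).2 hzt
  obtain ⟨P, -, hmax⟩ := zorn_subset_nonempty S hchain {s.zero} h0
  have hPid : s.IsIdeal P := hmax.1.1
  have hzP : z ∉ P := hmax.1.2
  refine ⟨P, hPid, hzP, ?_⟩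
  intro x y
  by_contra hcon
  push_neg at hcon
  obtain ⟨hx, hy⟩ := hcon
  have key : ∀ a : A, a ∉ P → z ∈ s.genIdeal P a := by
    intro a ha
    by_contra hzi
    have hgS : s.genIdeal P a ∈ S := ⟨s.genIdeal_isIdeal hPid a, hzi⟩
    have hsub := hmax.2 hgS (s.subset_genIdeal a)
    exact ha (hsub (s.self_mem_genIdeal hPid a))
  obtain ⟨b1, hb1, m, hm⟩ := key _ hx
  obtain ⟨b2, hb2, n, hn⟩ := key _ hy
  have h1 := s.le_inf hm hn
  have h2 : s.le (s.inf (s.oplus b1 (s.nsm m (s.om x y))) (s.oplus b2 (s.nsm n (s.om y x))))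
      (s.inf (s.oplus (s.oplus b1 b2) (s.nsm m (s.om x y)))
        (s.oplus (s.oplus b1 b2) (s.nsm n (s.om y x)))) :=
    s.inf_le_inf (s.oplus_le_oplus_left (s.le_oplus_left b1 b2) _)
      (s.oplus_le_oplus_left (s.le_oplus_right b2 b1) _)
  have h3 : s.inf (s.oplus (s.oplus b1 b2) (s.nsm m (s.om x y)))
      (s.oplus (s.oplus b1 b2) (s.nsm n (s.om y x))) = s.oplus (s.oplus b1 b2) s.zero := by
    rw [← s.oplus_inf, s.inf_nsm_nsm (s.inf_om_om_self x y) m n]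
  have h4 : s.le z (s.oplus (s.oplus b1 b2) s.zero) := by
    rw [← h3]; exact s.le_trans h1 h2
  rw [s.oplus_zero] at h4
  exact hzP (hPid.2.2 _ (hPid.2.1 b1 hb1 b2 hb2) z h4)

/-- The congruence associated to an ideal. -/
def qSetoid (P : Set A) (hP : s.IsIdeal P) : Setoid A where
  r x y := s.dd x y ∈ P
  iseqv := by
    refine ⟨fun x => ?_, fun {x y} h => ?_, fun {x y z} h1 h2 => ?_⟩
    · rw [s.dd_self]; exact hP.1
    · rw [s.dd_comm]; exact h
    · exact hP.2.2 _ (hP.2.1 _ h1 _ h2) _ (s.dd_triangle x y z)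

/-- Quotient MV-algebra. -/
def qMV (P : Set A) (hP : s.IsIdeal P) : MVStr (Quotient (s.qSetoid P hP)) where
  oplus := Quotient.map₂ s.oplus (by
    intro a c hac b d hbd
    show s.dd (s.oplus a b) (s.oplus c d) ∈ P
    have t1 := s.dd_triangle (s.oplus a b) (s.oplus c b) (s.oplus c d)
    have t2 : s.le (s.dd (s.oplus a b) (s.oplus c b)) (s.dd a c) := s.dd_oplus_le a c b
    have t3 : s.le (s.dd (s.oplus c b) (s.oplus c d)) (s.dd b d) := by
      have h5 := s.dd_oplus_le b d c
      rwa [s.oplus_comm b c, s.oplus_comm d c] at h5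
    have t4 := s.le_trans t1 (s.oplus_le_oplus t2 t3)
    exact hP.2.2 _ (hP.2.1 _ hac _ hbd) _ t4)
  neg := Quotient.map s.neg (by
    intro a b hab
    show s.dd (s.neg a) (s.neg b) ∈ P
    rw [s.dd_neg]; exact hab)
  zero := Quotient.mk _ s.zero
  oplus_comm := by
    intro x y
    refine Quotient.inductionOn₂ x y fun a b => ?_
    simp only [Quotient.map₂_mk]
    exact congrArg _ (s.oplus_comm a b)
  oplus_assoc := by
    intro x y z
    refine Quotient.inductionOn₃ x y z fun a b c => ?_
    simp only [Quotient.map₂_mk]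
    exact congrArg _ (s.oplus_assoc a b c)
  oplus_zero := by
    intro x
    refine Quotient.inductionOn x fun a => ?_
    simp only [Quotient.map₂_mk]
    exact congrArg _ (s.oplus_zero a)
  neg_neg := by
    intro x
    refine Quotient.inductionOn x fun a => ?_
    simp only [Quotient.map_mk]
    exact congrArg _ (s.neg_neg a)
  oplus_one := by
    intro x
    refine Quotient.inductionOn x fun a => ?_
    simp only [Quotient.map_mk, Quotient.map₂_mk]
    exact congrArg _ (s.oplus_one a)
  mv6 := by
    intro x y
    refine Quotient.inductionOn₂ x y fun a b => ?_
    simp only [Quotient.map_mk, Quotient.map₂_mk]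
    exact congrArg _ (s.mv6 a b)

variable {P : Set A} (hP : s.IsIdeal P)

lemma qMV_mk_oplus (a b : A) :
    (s.qMV P hP).oplus (Quotient.mk _ a) (Quotient.mk _ b) = Quotient.mk _ (s.oplus a b) :=
  rfl

lemma qMV_mk_neg (a : A) :
    (s.qMV P hP).neg (Quotient.mk _ a) = Quotient.mk _ (s.neg a) :=
  rfl

lemma qMV_one : (s.qMV P hP).one = Quotient.mk (s.qSetoid P hP) s.one := rfl

lemma qMV_hom : IsMVHom s (s.qMV P hP) (Quotient.mk _) :=
  ⟨fun x y => (s.qMV_mk_oplus hP x y).symm, fun x => (s.qMV_mk_neg hP x).symm, rfl⟩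

lemma qMV_le_iff (a b : A) :
    (s.qMV P hP).le (Quotient.mk _ a) (Quotient.mk _ b) ↔ s.om a b ∈ P := by
  show (s.qMV P hP).oplus ((s.qMV P hP).neg _) _ = (s.qMV P hP).one ↔ _
  rw [s.qMV_mk_neg, s.qMV_mk_oplus, s.qMV_one]
  constructor
  · intro h
    have h2 : s.dd (s.oplus (s.neg a) b) s.one ∈ P := Quotient.exact h
    rw [s.dd_one] at h2
    exact h2
  · intro h
    apply Quotient.sound
    show s.dd (s.oplus (s.neg a) b) s.one ∈ P
    rw [s.dd_one]
    exact h

lemma qMV_linear (hprime : ∀ x y, s.om x y ∈ P ∨ s.om y x ∈ P) : (s.qMV P hP).Linear := by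
  intro x y
  refine Quotient.inductionOn₂ x y fun a b => ?_
  rcases hprime a b with h | h
  · exact Or.inl ((s.qMV_le_iff hP a b).mpr h)
  · exact Or.inr ((s.qMV_le_iff hP b a).mpr h)

lemma qMV_ne_zero_one (hone : s.one ∉ P) : (s.qMV P hP).zero ≠ (s.qMV P hP).one := by
  intro h
  have h2 : Quotient.mk (s.qSetoid P hP) s.zero = Quotient.mk _ s.one := by
    rw [← s.qMV_one hP]; exact h
  have h3 : s.dd s.zero s.one ∈ P := Quotient.exact h2
  rw [s.dd_one] at h3
  exact hone h3

lemma qMV_sep {a b : A} (h : s.dd a b ∉ P) :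
    Quotient.mk (s.qSetoid P hP) a ≠ Quotient.mk _ b := fun he => h (Quotient.exact he)

lemma dd_ne_zero {a b : A} (h : a ≠ b) : s.dd a b ≠ s.zero := fun he => h (s.eq_of_dd_zero he)

lemma one_not_mem {Q : Set A} (hQ : s.IsIdeal Q) {w : A} (hw : w ∉ Q) : s.one ∉ Q :=
  fun h1 => hw (hQ.2.2 _ h1 w (s.le_one w))

end MVStr

end Ideals
section ChainLemmas

namespace MVStr

variable {A : Type*} (s : MVStr A)

/-- `x ⊙ y`. -/
def ot (x y : A) : A := s.neg (s.oplus (s.neg x) (s.neg y))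

lemma ot_comm (x y : A) : s.ot x y = s.ot y x := congrArg s.neg (s.oplus_comm _ _)

lemma neg_ot (x y : A) : s.neg (s.ot x y) = s.oplus (s.neg x) (s.neg y) := s.neg_neg _

lemma ot_neg_neg (x y : A) : s.ot (s.neg x) (s.neg y) = s.neg (s.oplus x y) := by
  show s.neg (s.oplus (s.neg (s.neg x)) (s.neg (s.neg y))) = _
  rw [s.neg_neg, s.neg_neg]

lemma ot_assoc (x y z : A) : s.ot (s.ot x y) z = s.ot x (s.ot y z) := by
  show s.neg (s.oplus (s.neg (s.ot x y)) (s.neg z)) =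
    s.neg (s.oplus (s.neg x) (s.neg (s.ot y z)))
  rw [s.neg_ot, s.neg_ot, ← s.oplus_assoc]

lemma om_eq_ot_neg (x y : A) : s.om x y = s.ot x (s.neg y) := by
  show s.neg (s.oplus (s.neg x) y) = s.neg (s.oplus (s.neg x) (s.neg (s.neg y)))
  rw [s.neg_neg]

lemma ot_eq_om (x y : A) : s.ot x y = s.om x (s.neg y) := by
  rw [s.om_eq_ot_neg, s.neg_neg]

lemma ot_le_left (x y : A) : s.le (s.ot x y) x := by
  show s.oplus (s.neg (s.ot x y)) x = s.one
  rw [s.neg_ot, s.oplus_comm (s.neg x) (s.neg y), ← s.oplus_assoc, s.neg_oplus_self,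
    s.oplus_one']

lemma ot_le_right (x y : A) : s.le (s.ot x y) y := by
  rw [s.ot_comm]; exact s.ot_le_left y x

lemma ot_le_ot_right {y y' : A} (h : s.le y y') (x : A) : s.le (s.ot x y) (s.ot x y') := by
  have h2 := s.neg_le_neg (s.oplus_le_oplus_right (s.neg_le_neg h) (s.neg x))
  exact h2

lemma ot_one (x : A) : s.ot x s.one = x := by
  show s.neg (s.oplus (s.neg x) (s.neg s.one)) = x
  rw [s.neg_one, s.oplus_zero, s.neg_neg]

lemma one_ot (x : A) : s.ot s.one x = x := by rw [s.ot_comm]; exact s.ot_one x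

lemma ot_neg_self (x : A) : s.ot x (s.neg x) = s.zero := by
  show s.neg (s.oplus (s.neg x) (s.neg (s.neg x))) = s.zero
  rw [s.oplus_neg_self, s.neg_one]

lemma ot_inf (p q : A) : s.ot p (s.oplus (s.neg p) q) = s.inf q p := by
  rw [s.inf_eq_om]; rfl

lemma oplus_eq_one_iff {x y : A} : s.oplus x y = s.one ↔ s.le (s.neg x) y := by
  show _ ↔ s.oplus (s.neg (s.neg x)) y = s.one
  rw [s.neg_neg]

lemma chain_not_le (lin : s.Linear) {x y : A} (h : ¬ s.le x y) : s.le y x := (lin x y).resolve_left h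

lemma chain_le_neg_of_ne_one (lin : s.Linear) {x y : A} (h : s.oplus x y ≠ s.one) : s.le x (s.neg y) := by
  have h1 : ¬ s.le (s.neg x) y := fun hl => h (s.oplus_eq_one_iff.mpr hl)
  have h2 : s.le y (s.neg x) := s.chain_not_le lin h1
  have h3 := s.neg_le_neg h2
  rwa [s.neg_neg] at h3

lemma chain_ot_zero (lin : s.Linear) {x y : A} (h : s.oplus x y ≠ s.one) : s.ot x y = s.zero := by
  have h3 : s.le x (s.neg y) := s.chain_le_neg_of_ne_one lin h
  have h4 : s.oplus (s.neg x) (s.neg y) = s.one := h3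
  show s.neg (s.oplus (s.neg x) (s.neg y)) = s.zero
  rw [h4, s.neg_one]

lemma chain_om_oplus (lin : s.Linear) {x y : A} (h : s.oplus x y ≠ s.one) : s.om (s.oplus x y) y = x := by
  have hxy : s.le x (s.neg y) := s.chain_le_neg_of_ne_one lin h
  rw [s.oplus_comm x y, s.om_oplus y x]
  exact s.inf_of_le hxy

lemma chain_HX (lin : s.Linear) {a b c : A} (h3 : s.oplus b c ≠ s.one)
    (h2 : s.oplus a (s.oplus b c) = s.one) :
    s.le (s.ot (s.oplus a b) c) (s.ot a (s.oplus b c)) := by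
  have hc : s.om (s.oplus b c) b = c := by
    rw [s.oplus_comm b c]
    exact s.chain_om_oplus lin (by rwa [s.oplus_comm c b])
  have key : s.oplus (s.neg c) (s.ot a (s.oplus b c)) = s.oplus b a := by
    have hnc : s.neg c = s.oplus (s.neg (s.oplus b c)) b := by
      conv_lhs => rw [← hc]
      exact s.neg_neg _
    have hotD : s.ot a (s.oplus b c) = s.om a (s.neg (s.oplus b c)) := s.ot_eq_om a _
    rw [hnc, hotD, s.oplus_comm (s.neg (s.oplus b c)) b,
      ← s.oplus_assoc b (s.neg (s.oplus b c)) (s.om a (s.neg (s.oplus b c)))]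
    congr 1
    rw [s.oplus_comm (s.neg (s.oplus b c)) (s.om a (s.neg (s.oplus b c)))]
    have hle : s.le (s.neg (s.oplus b c)) a := by
      have h5 := s.neg_le_neg (s.oplus_eq_one_iff.mp h2)
      rwa [s.neg_neg] at h5
    have h6 : s.sup a (s.neg (s.oplus b c)) = a := by
      rw [s.sup_comm]; exact s.sup_of_le hle
    exact h6
  have goal2 : s.le (s.oplus a b) (s.oplus (s.neg c) (s.ot a (s.oplus b c))) := by
    rw [key, s.oplus_comm b a]; exact s.le_refl _
  rw [s.ot_eq_om (s.oplus a b) c]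
  exact s.om_le_iff.mpr goal2

lemma chain_CL3 (lin : s.Linear) {a b c : A} (h1 : s.oplus a b ≠ s.one)
    (h2 : s.oplus (s.oplus a b) c = s.one) (h3 : s.oplus b c ≠ s.one) :
    s.ot a (s.oplus b c) = s.ot (s.oplus a b) c := by
  apply s.le_antisymm
  · have h2' : s.oplus c (s.oplus b a) = s.one := by
      rw [s.oplus_comm c (s.oplus b a), s.oplus_comm b a]; exact h2
    have h3' : s.oplus b a ≠ s.one := by rwa [s.oplus_comm b a]
    have hx := s.chain_HX lin h3' h2'
    rw [s.oplus_comm c b, s.oplus_comm b a] at hx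
    rwa [s.ot_comm (s.oplus b c) a, s.ot_comm c (s.oplus a b)] at hx
  · exact s.chain_HX lin h3 (by rw [s.oplus_assoc]; exact h2)

lemma chain_CL2 (lin : s.Linear) {a b c : A} (h1 : s.oplus a b ≠ s.one)
    (h2 : s.oplus (s.oplus a b) c = s.one) (h3 : s.oplus b c = s.one) :
    s.oplus a (s.ot b c) = s.ot (s.oplus a b) c := by
  have e1 : s.oplus (s.oplus a (s.ot b c)) (s.neg c) = s.oplus a b := by
    rw [← s.oplus_assoc a (s.ot b c) (s.neg c)]
    congr 1
    have hcb : s.le (s.neg c) b := by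
      have h4 := s.neg_le_neg (s.oplus_eq_one_iff.mp h3)
      rwa [s.neg_neg] at h4
    rw [s.ot_eq_om b c]
    have e3 : s.sup b (s.neg c) = b := by rw [s.sup_comm]; exact s.sup_of_le hcb
    exact e3
  have e4 : s.oplus (s.ot (s.oplus a b) c) (s.neg c) = s.oplus a b := by
    have hcb2 : s.le (s.neg c) (s.oplus a b) := by
      have h4 := s.neg_le_neg (s.oplus_eq_one_iff.mp h2)
      rwa [s.neg_neg] at h4
    rw [s.ot_eq_om (s.oplus a b) c]
    have e3 : s.sup (s.oplus a b) (s.neg c) = s.oplus a b := by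
      rw [s.sup_comm]; exact s.sup_of_le hcb2
    exact e3
  have c1 : s.om (s.oplus (s.oplus a (s.ot b c)) (s.neg c)) (s.neg c) =
      s.oplus a (s.ot b c) := by
    apply s.chain_om_oplus lin; rw [e1]; exact h1
  have c2 : s.om (s.oplus (s.ot (s.oplus a b) c) (s.neg c)) (s.neg c) =
      s.ot (s.oplus a b) c := by
    apply s.chain_om_oplus lin; rw [e4]; exact h1
  rw [← c1, ← c2, e1, e4]

lemma chain_CL2_ne {a b c : A} (h1 : s.oplus a b ≠ s.one) :
    s.oplus a (s.ot b c) ≠ s.one := by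
  intro h
  exact h1 (s.oplus_eq_one_iff.mpr
    (s.le_trans (s.oplus_eq_one_iff.mp h) (s.ot_le_left b c)))

lemma chain_CL4a {a b c : A} (h2 : s.oplus (s.ot a b) c = s.one) :
    s.oplus b c = s.one := by
  have h5 := s.oplus_le_oplus_left (s.ot_le_right a b) c
  rw [h2] at h5
  exact (s.le_antisymm h5 (s.le_one _)).symm

lemma chain_CL4b {a b c : A} (h1 : s.oplus a b = s.one)
    (h2 : s.oplus (s.ot a b) c = s.one) : s.oplus a (s.ot b c) = s.one := by
  have hc : s.le (s.neg (s.ot a b)) c := s.oplus_eq_one_iff.mp h2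
  rw [s.neg_ot] at hc
  rw [s.oplus_comm (s.neg a) (s.neg b)] at hc
  have h5 := s.ot_le_ot_right hc b
  rw [s.ot_inf] at h5
  have h7 : s.inf (s.neg a) b = s.neg a := s.inf_of_le (s.oplus_eq_one_iff.mp h1)
  rw [h7] at h5
  exact s.oplus_eq_one_iff.mpr h5

lemma chain_ot_eq_zero_negs {a b : A} (h : s.ot a b = s.zero) :
    s.oplus (s.neg a) (s.neg b) = s.one := by
  have h7 := congrArg s.neg h
  rwa [s.neg_ot] at h7

lemma chain_ot_ne_zero_negs {a b : A} (h : s.ot a b ≠ s.zero) :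
    s.oplus (s.neg a) (s.neg b) ≠ s.one := by
  intro hcon
  apply h
  have h7 := congrArg s.neg hcon
  rw [s.neg_one] at h7
  exact h7

lemma chain_CL5 (lin : s.Linear) {a b c : A} (h1 : s.oplus a b = s.one)
    (h2 : s.oplus (s.ot a b) c ≠ s.one) (h3 : s.oplus b c = s.one) :
    s.oplus a (s.ot b c) = s.oplus (s.ot a b) c := by
  by_cases hab : s.ot a b = s.zero
  · have hba := s.chain_ot_eq_zero_negs hab
    have hanb : s.le a (s.neg b) := by
      have h5 := s.oplus_eq_one_iff.mp hba; rwa [s.neg_neg] at h5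
    have hbna : s.le b (s.neg a) := by
      have h5 := s.neg_le_neg hanb; rwa [s.neg_neg] at h5
    have hnab : s.le (s.neg a) b := s.oplus_eq_one_iff.mp h1
    have hb : b = s.neg a := s.le_antisymm hbna hnab
    subst hb
    rw [hab, s.zero_oplus]
    rw [s.ot_comm (s.neg a) c, ← s.om_eq_ot_neg]
    have hac : s.le a c := by
      have h5 := s.oplus_eq_one_iff.mp h3; rwa [s.neg_neg] at h5
    rw [s.oplus_comm a (s.om c a)]
    have h6 : s.sup c a = c := by rw [s.sup_comm]; exact s.sup_of_le hac
    exact h6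
  · by_cases hbc : s.ot b c = s.zero
    · have hbc' := s.chain_ot_eq_zero_negs hbc
      have hbnc : s.le b (s.neg c) := by
        have h5 := s.oplus_eq_one_iff.mp hbc'; rwa [s.neg_neg] at h5
      have hcnb : s.le c (s.neg b) := by
        have h5 := s.neg_le_neg hbnc; rwa [s.neg_neg] at h5
      have hnbc : s.le (s.neg b) c := s.oplus_eq_one_iff.mp h3
      have hcb : c = s.neg b := s.le_antisymm hcnb hnbc
      subst hcb
      rw [hbc, s.oplus_zero, s.ot_eq_om a b]
      have hnb_a : s.le (s.neg b) a := by
        have h5 := s.neg_le_neg (s.oplus_eq_one_iff.mp h1); rwa [s.neg_neg] at h5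
      have h6 : s.sup a (s.neg b) = a := by rw [s.sup_comm]; exact s.sup_of_le hnb_a
      exact h6.symm
    · have g1 : s.oplus (s.neg a) (s.neg b) ≠ s.one := s.chain_ot_ne_zero_negs hab
      have g3 : s.oplus (s.neg b) (s.neg c) ≠ s.one := s.chain_ot_ne_zero_negs hbc
      have g2 : s.oplus (s.oplus (s.neg a) (s.neg b)) (s.neg c) = s.one := by
        have hz := s.chain_ot_zero lin h2
        have h7 := congrArg s.neg hz
        rwa [s.neg_ot (s.ot a b) c, s.neg_ot a b] at h7
      have hmain := s.chain_CL3 lin g1 g2 g3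
      have h6 := congrArg s.neg hmain
      rwa [s.neg_ot (s.neg a) (s.oplus (s.neg b) (s.neg c)), s.neg_neg a,
        s.neg_ot (s.oplus (s.neg a) (s.neg b)) (s.neg c), s.neg_neg c] at h6

lemma chain_CL5_ne {a b c : A} (h2 : s.oplus (s.ot a b) c ≠ s.one)
    (h3 : s.oplus b c = s.one) (h1 : s.oplus a b = s.one) :
    s.oplus a (s.ot b c) ≠ s.one := by
  intro hcon
  apply h2
  have h1' : s.oplus c b = s.one := by rwa [s.oplus_comm] at h3
  have h2' : s.oplus (s.ot c b) a = s.one := by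
    rw [s.ot_comm c b, s.oplus_comm]; exact hcon
  have h5 := s.chain_CL4b h1' h2'
  rwa [s.ot_comm b a, s.oplus_comm] at h5

lemma chain_CL6 (lin : s.Linear) {a b c : A} (h1 : s.oplus a b = s.one)
    (h2 : s.oplus (s.ot a b) c ≠ s.one) (h3 : s.oplus b c ≠ s.one) :
    s.ot a (s.oplus b c) = s.oplus (s.ot a b) c := by
  by_cases hab : s.ot a b = s.zero
  · have hba := s.chain_ot_eq_zero_negs hab
    have hanb : s.le a (s.neg b) := by
      have h5 := s.oplus_eq_one_iff.mp hba; rwa [s.neg_neg] at h5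
    have hbna : s.le b (s.neg a) := by
      have h5 := s.neg_le_neg hanb; rwa [s.neg_neg] at h5
    have hnab : s.le (s.neg a) b := s.oplus_eq_one_iff.mp h1
    have hb : b = s.neg a := s.le_antisymm hbna hnab
    subst hb
    rw [hab, s.zero_oplus, s.ot_inf]
    have hca : s.le c a := by
      have h5 : ¬ s.le (s.neg (s.neg a)) c := fun hl => h3 (s.oplus_eq_one_iff.mpr hl)
      rw [s.neg_neg] at h5
      exact s.chain_not_le lin h5
    exact s.inf_of_le hca
  · have g1 : s.oplus (s.neg a) (s.neg b) ≠ s.one := s.chain_ot_ne_zero_negs hab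
    have g2 : s.oplus (s.oplus (s.neg a) (s.neg b)) (s.neg c) = s.one := by
      have hz := s.chain_ot_zero lin h2
      have h7 := congrArg s.neg hz
      rwa [s.neg_ot (s.ot a b) c, s.neg_ot a b] at h7
    have g3 : s.oplus (s.neg b) (s.neg c) = s.one := by
      have hz := s.chain_ot_zero lin h3
      have h7 := congrArg s.neg hz
      rwa [s.neg_ot b c] at h7
    have hmain := s.chain_CL2 lin g1 g2 g3
    have h6 := congrArg s.neg hmain
    rwa [s.ot_neg_neg b c, s.neg_ot (s.oplus (s.neg a) (s.neg b)) (s.neg c),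
      s.neg_neg c] at h6

end MVStr

end ChainLemmas
section ChangGroup

noncomputable section
open Classical

namespace MVStr

variable {C : Type*} (t : MVStr C)

/-- Carrier of Chang's enveloping group of an MV-chain. -/
abbrev ChangC (t : MVStr C) := ℤ × {c : C // c ≠ t.one}

lemma ot_ne_one {a b : C} (ha : a ≠ t.one) : t.ot a b ≠ t.one := fun hone =>
  ha (t.le_antisymm (t.le_one _) (hone ▸ t.ot_le_left a b))

/-- Addition with carry. -/
def chAdd (x y : ChangC t) : ChangC t :=
  if h : t.oplus x.2.1 y.2.1 = t.one then
    (x.1 + y.1 + 1, ⟨t.ot x.2.1 y.2.1, t.ot_ne_one x.2.2⟩)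
  else (x.1 + y.1, ⟨t.oplus x.2.1 y.2.1, h⟩)

def chNeg (x : ChangC t) : ChangC t :=
  if h : x.2.1 = t.zero then (-x.1, x.2)
  else (-x.1 - 1, ⟨t.neg x.2.1, fun hone => h (by
    rw [← t.neg_neg x.2.1, hone, t.neg_one])⟩)

variable (h01 : t.zero ≠ t.one)

def chZero : ChangC t := (0, ⟨t.zero, h01⟩)

lemma chAdd_comm (x y : ChangC t) : chAdd t x y = chAdd t y x := by
  by_cases h : t.oplus x.2.1 y.2.1 = t.one
  · have h' : t.oplus y.2.1 x.2.1 = t.one := by rwa [t.oplus_comm] at h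
    simp only [chAdd, dif_pos h, dif_pos h']
    exact Prod.ext (by omega) (Subtype.ext (t.ot_comm _ _))
  · have h' : ¬ t.oplus y.2.1 x.2.1 = t.one := by rwa [t.oplus_comm] at h
    simp only [chAdd, dif_neg h, dif_neg h']
    exact Prod.ext (by omega) (Subtype.ext (t.oplus_comm _ _))

lemma chAdd_zero (x : ChangC t) : chAdd t x (chZero t h01) = x := by
  have h : ¬ t.oplus x.2.1 (chZero t h01).2.1 = t.one := by
    show ¬ t.oplus x.2.1 t.zero = t.one
    rw [t.oplus_zero]; exact x.2.2
  simp only [chAdd, dif_neg h]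
  refine Prod.ext (by simp [chZero]) (Subtype.ext ?_)
  show t.oplus x.2.1 t.zero = x.2.1
  exact t.oplus_zero _

lemma chZero_add (x : ChangC t) : chAdd t (chZero t h01) x = x := by
  rw [chAdd_comm]; exact chAdd_zero t h01 x

lemma chNeg_add_cancel (x : ChangC t) : chAdd t (chNeg t x) x = chZero t h01 := by
  by_cases h : x.2.1 = t.zero
  · simp only [chNeg, dif_pos h]
    have hc : ¬ t.oplus x.2.1 x.2.1 = t.one := by
      rw [h, t.oplus_zero]; exact h01
    simp only [chAdd, dif_neg hc]
    refine Prod.ext (by simp [chZero]) (Subtype.ext ?_)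
    show t.oplus x.2.1 x.2.1 = t.zero
    rw [h, t.oplus_zero]
  · simp only [chNeg, dif_neg h]
    have hc : t.oplus (t.neg x.2.1) x.2.1 = t.one := t.neg_oplus_self _
    simp only [chAdd, dif_pos hc]
    refine Prod.ext (by simp [chZero]; omega) (Subtype.ext ?_)
    show t.ot (t.neg x.2.1) x.2.1 = t.zero
    rw [t.ot_comm]; exact t.ot_neg_self _

lemma chAdd_assoc (lin : t.Linear) (x y z : ChangC t) :
    chAdd t (chAdd t x y) z = chAdd t x (chAdd t y z) := by
  obtain ⟨m, a, ha⟩ := x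
  obtain ⟨n, b, hb⟩ := y
  obtain ⟨p, c, hc⟩ := z
  by_cases h1 : t.oplus a b = t.one
  · by_cases h2 : t.oplus (t.ot a b) c = t.one
    · have hbc : t.oplus b c = t.one := t.chain_CL4a h2
      have habc : t.oplus a (t.ot b c) = t.one := t.chain_CL4b h1 h2
      simp only [chAdd, dif_pos h1, dif_pos h2, dif_pos hbc, dif_pos habc]
      exact Prod.ext (by omega) (Subtype.ext (t.ot_assoc a b c))
    · by_cases h3 : t.oplus b c = t.one
      · have hne : t.oplus a (t.ot b c) ≠ t.one := t.chain_CL5_ne h2 h3 h1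
        have heq : t.oplus a (t.ot b c) = t.oplus (t.ot a b) c := t.chain_CL5 lin h1 h2 h3
        simp only [chAdd, dif_pos h1, dif_neg h2, dif_pos h3, dif_neg hne]
        exact Prod.ext (by omega) (Subtype.ext heq.symm)
      · have houter : t.oplus a (t.oplus b c) = t.one :=
          t.oplus_eq_one_iff.mpr
            (t.le_trans (t.oplus_eq_one_iff.mp h1) (t.le_oplus_left b c))
        have heq : t.ot a (t.oplus b c) = t.oplus (t.ot a b) c := t.chain_CL6 lin h1 h2 h3
        simp only [chAdd, dif_pos h1, dif_neg h2, dif_neg h3, dif_pos houter]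
        exact Prod.ext (by omega) (Subtype.ext heq.symm)
  · by_cases h2 : t.oplus (t.oplus a b) c = t.one
    · by_cases h3 : t.oplus b c = t.one
      · have hne : t.oplus a (t.ot b c) ≠ t.one := t.chain_CL2_ne h1
        have heq : t.oplus a (t.ot b c) = t.ot (t.oplus a b) c := t.chain_CL2 lin h1 h2 h3
        simp only [chAdd, dif_neg h1, dif_pos h2, dif_pos h3, dif_neg hne]
        exact Prod.ext (by omega) (Subtype.ext heq.symm)
      · have houter : t.oplus a (t.oplus b c) = t.one := by
          rw [t.oplus_assoc]; exact h2
        have heq : t.ot a (t.oplus b c) = t.ot (t.oplus a b) c := t.chain_CL3 lin h1 h2 h3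
        simp only [chAdd, dif_neg h1, dif_pos h2, dif_neg h3, dif_pos houter]
        exact Prod.ext (by omega) (Subtype.ext heq.symm)
    · have h3 : ¬ t.oplus b c = t.one := by
        intro h
        apply h2
        rw [← t.oplus_assoc, h, t.oplus_one']
      have houter : ¬ t.oplus a (t.oplus b c) = t.one := by
        rwa [t.oplus_assoc]
      simp only [chAdd, dif_neg h1, dif_neg h2, dif_neg h3, dif_neg houter]
      exact Prod.ext (by omega) (Subtype.ext (t.oplus_assoc a b c).symm)

/-- The order. -/
def chLe (x y : ChangC t) : Prop := x.1 < y.1 ∨ (x.1 = y.1 ∧ t.le x.2.1 y.2.1)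

lemma chLe_refl (x : ChangC t) : chLe t x x := Or.inr ⟨rfl, t.le_refl _⟩

lemma chLe_trans {x y z : ChangC t} (hxy : chLe t x y) (hyz : chLe t y z) : chLe t x z := by
  rcases hxy with h | ⟨h, h'⟩ <;> rcases hyz with g | ⟨g, g'⟩
  · exact Or.inl (by omega)
  · exact Or.inl (by omega)
  · exact Or.inl (by omega)
  · exact Or.inr ⟨by omega, t.le_trans h' g'⟩

lemma chLe_antisymm {x y : ChangC t} (hxy : chLe t x y) (hyx : chLe t y x) : x = y := by
  rcases hxy with h | ⟨h, h'⟩ <;> rcases hyx with g | ⟨g, g'⟩ <;> first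
    | omega
    | exact Prod.ext h (Subtype.ext (t.le_antisymm h' g'))

lemma chLe_total (lin : t.Linear) (x y : ChangC t) : chLe t x y ∨ chLe t y x := by
  rcases lt_trichotomy x.1 y.1 with h | h | h
  · exact Or.inl (Or.inl h)
  · rcases lin x.2.1 y.2.1 with h' | h'
    · exact Or.inl (Or.inr ⟨h, h'⟩)
    · exact Or.inr (Or.inr ⟨h.symm, h'⟩)
  · exact Or.inr (Or.inl h)

lemma chAdd_le_left {x y : ChangC t} (h : chLe t x y) (z : ChangC t) :
    chLe t (chAdd t z x) (chAdd t z y) := by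
  rcases h with h | ⟨h, hab⟩
  · by_cases c1 : t.oplus z.2.1 x.2.1 = t.one
    · by_cases c2 : t.oplus z.2.1 y.2.1 = t.one
      · simp only [chAdd, chLe, dif_pos c1, dif_pos c2]
        exact Or.inl (by omega)
      · simp only [chAdd, chLe, dif_pos c1, dif_neg c2]
        rcases eq_or_lt_of_le (show z.1 + x.1 + 1 ≤ z.1 + y.1 by omega) with he | hl
        · exact Or.inr ⟨he, t.le_trans (t.ot_le_left _ _) (t.le_oplus_left _ _)⟩
        · exact Or.inl hl
    · by_cases c2 : t.oplus z.2.1 y.2.1 = t.one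
      · simp only [chAdd, chLe, dif_neg c1, dif_pos c2]
        exact Or.inl (by omega)
      · simp only [chAdd, chLe, dif_neg c1, dif_neg c2]
        exact Or.inl (by omega)
  · have hc : t.oplus z.2.1 x.2.1 = t.one → t.oplus z.2.1 y.2.1 = t.one := by
      intro h'
      have h5 := t.oplus_le_oplus_right hab z.2.1
      rw [h'] at h5
      exact (t.le_antisymm h5 (t.le_one _)).symm
    by_cases c2 : t.oplus z.2.1 y.2.1 = t.one
    · by_cases c1 : t.oplus z.2.1 x.2.1 = t.one
      · simp only [chAdd, chLe, dif_pos c1, dif_pos c2]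
        exact Or.inr ⟨by omega, t.ot_le_ot_right hab z.2.1⟩
      · simp only [chAdd, chLe, dif_neg c1, dif_pos c2]
        exact Or.inl (by omega)
    · have c1 : ¬ t.oplus z.2.1 x.2.1 = t.one := fun h' => c2 (hc h')
      simp only [chAdd, chLe, dif_neg c1, dif_neg c2]
      exact Or.inr ⟨by omega, t.oplus_le_oplus_right hab z.2.1⟩

/-- The linearly ordered abelian group structure on `ChangC`. -/
def changLO (lin : t.Linear) : AddCommGroup (ChangC t) := by
  letI : Add (ChangC t) := ⟨chAdd t⟩
  letI : Zero (ChangC t) := ⟨chZero t h01⟩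
  letI : Neg (ChangC t) := ⟨chNeg t⟩
  exact
  { add := (· + ·)
    zero := (0 : ChangC t)
    neg := (- ·)
    nsmul := nsmulRec
    zsmul := zsmulRec
    add_assoc := chAdd_assoc t lin
    zero_add := chZero_add t h01
    add_zero := chAdd_zero t h01
    neg_add_cancel := chNeg_add_cancel t h01
    add_comm := chAdd_comm t }

/-- The linear order on `ChangC`. -/
def changLOrd (lin : t.Linear) : LinearOrder (ChangC t) :=
  { le := chLe t
    le_refl := chLe_refl t
    le_trans := fun _ _ _ => chLe_trans t
    le_antisymm := fun _ _ => chLe_antisymm t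
    le_total := chLe_total t lin
    toDecidableLE := fun _ _ => Classical.propDecidable _ }

lemma changOrd (lin : t.Linear) :
    @IsOrderedAddMonoid (ChangC t) (t.changLO h01 lin).toAddCommMonoid
      (t.changLOrd lin).toPartialOrder.toPreorder := by
  letI : AddCommGroup (ChangC t) := t.changLO h01 lin
  letI : LinearOrder (ChangC t) := t.changLOrd lin
  exact
  { add_le_add_left := fun a b h c => by
      rw [add_comm a c, add_comm b c]; exact chAdd_le_left t h c }

end MVStr

end

end ChangGroup
section Iota

noncomputable section
open Classical

namespace MVStr

variable {C : Type*} (t : MVStr C) (h01 : t.zero ≠ t.one)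

/-- Embedding of the chain into its Chang group. -/
def iota (c : C) : ChangC t :=
  if h : c = t.one then ((1 : ℤ), ⟨t.zero, h01⟩) else ((0 : ℤ), ⟨c, h⟩)

lemma iota_zero : iota t h01 t.zero = chZero t h01 := by
  simp only [iota, dif_neg h01]
  rfl

lemma iota_inj {x y : C} (h : iota t h01 x = iota t h01 y) : x = y := by
  by_cases hx : x = t.one <;> by_cases hy : y = t.one
  · rw [hx, hy]
  · simp only [iota, dif_pos hx, dif_neg hy] at h
    exact absurd (congrArg Prod.fst h) (by simp)
  · simp only [iota, dif_neg hx, dif_pos hy] at h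
    exact absurd (congrArg Prod.fst h) (by simp)
  · simp only [iota, dif_neg hx, dif_neg hy] at h
    exact congrArg (fun p => (Prod.snd p).1) h

lemma iota_le {x y : C} (hxy : t.le x y) : chLe t (iota t h01 x) (iota t h01 y) := by
  by_cases hy : y = t.one
  · subst hy
    by_cases hx : x = t.one
    · subst hx; exact chLe_refl t _
    · simp only [iota, dif_pos rfl, dif_neg hx]
      exact Or.inl (by norm_num)
  · have hx : x ≠ t.one := by
      intro h; subst h
      exact hy (t.le_antisymm (t.le_one y) hxy)
    simp only [iota, dif_neg hx, dif_neg hy]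
    exact Or.inr ⟨rfl, hxy⟩

lemma iota_oplus (lin : t.Linear) (x y : C) :
    chAdd t (iota t h01 x) (iota t h01 y) =
      chAdd t (iota t h01 (t.oplus x y)) (iota t h01 (t.ot x y)) := by
  by_cases hx : x = t.one
  · subst hx
    rw [t.one_oplus y, t.one_ot y]
  · by_cases hy : y = t.one
    · subst hy
      rw [t.oplus_one', t.ot_one]
      exact chAdd_comm t _ _
    · by_cases h : t.oplus x y = t.one
      · have hot : t.ot x y ≠ t.one := t.ot_ne_one hx
        have hzot : ¬ t.oplus t.zero (t.ot x y) = t.one := by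
          rw [t.zero_oplus]; exact hot
        simp only [iota, dif_neg hx, dif_neg hy, dif_pos h, dif_neg hot]
        simp only [chAdd]
        rw [dif_pos h, dif_neg hzot]
        refine Prod.ext (by norm_num) (Subtype.ext ?_)
        show t.ot x y = t.oplus t.zero (t.ot x y)
        rw [t.zero_oplus]
      · have hzot : t.ot x y = t.zero := t.chain_ot_zero lin h
        rw [hzot, iota_zero t h01, chAdd_zero t h01]
        simp only [iota, dif_neg hx, dif_neg hy, dif_neg h]
        simp only [chAdd]
        rw [dif_neg h]
        exact Prod.ext (by norm_num) rfl

lemma iota_neg_add (lin : t.Linear) (x : C) :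
    chAdd t (iota t h01 x) (iota t h01 (t.neg x)) = iota t h01 t.one := by
  rw [iota_oplus t h01 lin x (t.neg x), t.oplus_neg_self, t.ot_neg_self, iota_zero t h01,
    chAdd_zero t h01]

end MVStr

end

end Iota
section Functional

open Classical

namespace MVGordan

variable {G : Type*} [AddCommGroup G] [LinearOrder G] [IsOrderedAddMonoid G]

/-- Rational lower approximations of `g` measured against the gauge `c`. -/
def hSet (c g : G) : Set ℝ :=
  {x | ∃ (p : ℤ) (k : ℕ), 0 < k ∧ x = (p : ℝ) / (k : ℝ) ∧ p • c ≤ k • g}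

variable {c : G}

lemma zsmul_cancel (hc : 0 < c) {p q : ℤ} (h : p • c ≤ q • c) : p ≤ q := by
  by_contra hq
  push_neg at hq
  have h2 : (0:G) < (p - q) • c := zsmul_pos hc (by omega)
  rw [sub_zsmul] at h2
  have h3 : q • c < p • c := sub_pos.mp (by rw [sub_eq_add_neg]; exact h2)
  exact absurd h (not_le.mpr h3)

lemma hSet_nonempty (hc : 0 < c) {g : G} (hg : ∃ m : ℕ, |g| ≤ m • c) : (hSet c g).Nonempty := by
  obtain ⟨m, hm⟩ := hg
  refine ⟨((-(m:ℤ) : ℤ) : ℝ) / ((1:ℕ) : ℝ), -(m:ℤ), 1, one_pos, rfl, ?_⟩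
  have h2 : -(m • c) ≤ g := le_trans (neg_le_neg hm) (neg_abs_le g)
  rw [one_nsmul]
  calc (-(m:ℤ)) • c = -((m:ℤ) • c) := neg_zsmul _ _
    _ = -(m • c) := by rw [natCast_zsmul]
    _ ≤ g := h2

lemma hSet_bddAbove (hc : 0 < c) {g : G} (hg : ∃ m : ℕ, |g| ≤ m • c) : BddAbove (hSet c g) := by
  obtain ⟨m, hm⟩ := hg
  refine ⟨(m : ℝ), ?_⟩
  rintro x ⟨p, k, hk, rfl, hpk⟩
  have h1 : k • g ≤ (k * m) • c := by
    calc k • g ≤ k • |g| := nsmul_le_nsmul_right (le_abs_self g) k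
      _ ≤ k • (m • c) := nsmul_le_nsmul_right hm k
      _ = (k * m) • c := smul_smul k m c
  have h2 : p • c ≤ ((k*m : ℕ) : ℤ) • c := by
    rw [natCast_zsmul]; exact le_trans hpk h1
  have h3 : p ≤ ((k*m : ℕ) : ℤ) := zsmul_cancel hc h2
  rw [div_le_iff₀ (by positivity)]
  calc (p:ℝ) ≤ ((k*m:ℕ):ℝ) := by exact_mod_cast h3
    _ = (m:ℝ) * (k:ℝ) := by push_cast; ring

/-- The Hölder-type functional. -/
noncomputable def hFun (c g : G) : ℝ := sSup (hSet c g)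

lemma hFun_zero (hc : 0 < c) : hFun c (0 : G) = 0 := by
  have hb : ∃ m : ℕ, |(0:G)| ≤ m • c := ⟨0, by simp⟩
  apply le_antisymm
  · apply csSup_le (hSet_nonempty hc hb)
    rintro x ⟨p, k, hk, rfl, hpk⟩
    rw [smul_zero] at hpk
    have h1 : p • c ≤ (0:ℤ) • c := by rw [zero_zsmul]; exact hpk
    have h2 : (p:ℝ) ≤ 0 := by exact_mod_cast zsmul_cancel hc h1
    exact div_nonpos_of_nonpos_of_nonneg h2 (by positivity)
  · apply le_csSup (hSet_bddAbove hc hb)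
    exact ⟨0, 1, one_pos, by norm_num, by simp⟩

lemma hFun_c_eq_one (hc : 0 < c) : hFun c c = 1 := by
  have hb : ∃ m : ℕ, |c| ≤ m • c := ⟨1, by rw [one_nsmul, abs_of_pos hc]⟩
  apply le_antisymm
  · apply csSup_le (hSet_nonempty hc hb)
    rintro x ⟨p, k, hk, rfl, hpk⟩
    have h1 : p • c ≤ ((k:ℤ)) • c := by rwa [natCast_zsmul]
    have h2 : (p:ℝ) ≤ (k:ℝ) := by exact_mod_cast zsmul_cancel hc h1
    rw [div_le_one (by positivity)]
    exact h2
  · apply le_csSup (hSet_bddAbove hc hb)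
    refine ⟨1, 1, one_pos, ?_, ?_⟩
    · norm_num
    · simp

lemma hFun_add_mem {g h : G} {x y : ℝ} (hx : x ∈ hSet c g) (hy : y ∈ hSet c h) :
    x + y ∈ hSet c (g + h) := by
  obtain ⟨p, k, hk, rfl, hpk⟩ := hx
  obtain ⟨q, l, hl, rfl, hql⟩ := hy
  refine ⟨p * (l:ℤ) + q * (k:ℤ), k * l, by positivity, ?_, ?_⟩
  · have hk0 : ((k:ℝ)) ≠ 0 := by positivity
    have hl0 : ((l:ℝ)) ≠ 0 := by positivity
    push_cast
    field_simp
  · have h1 : (p * (l:ℤ)) • c ≤ (k*l) • g := by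
      have e1 : (p * (l:ℤ)) • c = l • (p • c) := by
        rw [mul_comm, mul_zsmul, natCast_zsmul]
      rw [e1]
      calc l • (p • c) ≤ l • (k • g) := nsmul_le_nsmul_right hpk l
        _ = (l * k) • g := smul_smul l k g
        _ = (k * l) • g := by rw [mul_comm]
    have h2 : (q * (k:ℤ)) • c ≤ (k*l) • h := by
      have e1 : (q * (k:ℤ)) • c = k • (q • c) := by
        rw [mul_comm, mul_zsmul, natCast_zsmul]
      rw [e1]
      calc k • (q • c) ≤ k • (l • h) := nsmul_le_nsmul_right hql k
        _ = (k * l) • h := smul_smul k l h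
    rw [add_zsmul, smul_add]
    exact add_le_add h1 h2

lemma hBd_add (hc : 0 < c) {g h : G} (hg : ∃ m : ℕ, |g| ≤ m • c) (hh : ∃ m : ℕ, |h| ≤ m • c) :
    ∃ m : ℕ, |g + h| ≤ m • c := by
  obtain ⟨m1, h1⟩ := hg
  obtain ⟨m2, h2⟩ := hh
  exact ⟨m1 + m2, le_trans (abs_add_le g h) (by rw [add_nsmul]; exact add_le_add h1 h2)⟩

lemma hFun_add_ge (hc : 0 < c) {g h : G} (hg : ∃ m : ℕ, |g| ≤ m • c) (hh : ∃ m : ℕ, |h| ≤ m • c) :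
    hFun c g + hFun c h ≤ hFun c (g + h) := by
  have H2 : ∀ x ∈ hSet c g, ∀ y ∈ hSet c h, x + y ≤ hFun c (g+h) := fun x hx y hy =>
    le_csSup (hSet_bddAbove hc (hBd_add hc hg hh)) (hFun_add_mem hx hy)
  have H3 : ∀ x ∈ hSet c g, x + hFun c h ≤ hFun c (g + h) := by
    intro x hx
    have h6 : hFun c h ≤ hFun c (g+h) - x :=
      csSup_le (hSet_nonempty hc hh) (fun y hy => by have := H2 x hx y hy; linarith)
    linarith
  have h7 : hFun c g ≤ hFun c (g+h) - hFun c h :=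
    csSup_le (hSet_nonempty hc hg) (fun x hx => by have := H3 x hx; linarith)
  linarith

lemma hFun_add_le (hc : 0 < c) {g h : G} (hg : ∃ m : ℕ, |g| ≤ m • c) (hh : ∃ m : ℕ, |h| ≤ m • c) :
    hFun c (g + h) ≤ hFun c g + hFun c h := by
  have claim : ∀ (q : ℤ) (l : ℕ), 0 < l → q • c ≤ l • (g + h) →
      (q:ℝ)/(l:ℝ) ≤ hFun c g + hFun c h + 1/(l:ℝ) := by
    intro q l hl hql
    obtain ⟨m, hm⟩ := hg
    -- greatest p1 with p1 • c ≤ l • g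
    have hbdd : ∃ b : ℤ, ∀ z : ℤ, z • c ≤ l • g → z ≤ b := by
      refine ⟨(l*m : ℕ), fun z hz => ?_⟩
      have h1 : l • g ≤ (l*m) • c := by
        calc l • g ≤ l • |g| := nsmul_le_nsmul_right (le_abs_self g) l
          _ ≤ l • (m • c) := nsmul_le_nsmul_right hm l
          _ = (l*m) • c := smul_smul l m c
      have h2 : z • c ≤ ((l*m : ℕ) : ℤ) • c := by rw [natCast_zsmul]; exact le_trans hz h1
      exact zsmul_cancel hc h2
    have hinh : ∃ z : ℤ, z • c ≤ l • g := by
      refine ⟨-((l*m:ℕ):ℤ), ?_⟩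
      have h1 : -((l*m:ℕ) • c) ≤ -(l • |g|) := by
        apply neg_le_neg
        calc l • |g| ≤ l • (m • c) := nsmul_le_nsmul_right hm l
          _ = (l*m) • c := smul_smul l m c
      have h2 : -(l • |g|) ≤ l • g := by
        rw [← neg_nsmul]
        exact nsmul_le_nsmul_right (neg_abs_le g) l
      calc (-((l*m:ℕ):ℤ)) • c = -(((l*m:ℕ):ℤ) • c) := neg_zsmul _ _
        _ = -((l*m:ℕ) • c) := by rw [natCast_zsmul]
        _ ≤ -(l • |g|) := h1
        _ ≤ l • g := h2
    obtain ⟨p1, hp1, hp1max⟩ := Int.exists_greatest_of_bdd hbdd hinh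
    have hp2 : l • g < (p1 + 1) • c := by
      by_contra hle
      push_neg at hle
      have := hp1max (p1+1) hle
      omega
    have key2 : (q - p1 - 1) • c ≤ l • h := by
      have e : l • (g + h) = l • g + l • h := smul_add l g h
      have h6b : l • g + l • h < (p1+1) • c + l • h := add_lt_add_left hp2 (l • h)
      have h6 : q • c < (p1+1) • c + l • h := by
        rw [e] at hql
        exact lt_of_le_of_lt hql h6b
      have h7 : q • c - (p1+1) • c ≤ l • h := by
        have h6' : q • c < l • h + (p1+1) • c := by
          rwa [add_comm ((p1+1) • c) (l • h)] at h6
        exact le_of_lt (sub_lt_iff_lt_add.mpr h6')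
      have h8 : (q - p1 - 1) • c = q • c - (p1+1) • c := by
        rw [show q - p1 - 1 = q - (p1+1) by ring, sub_zsmul, sub_eq_add_neg]
      rw [h8]
      exact h7
    have m1 : ((p1:ℝ))/(l:ℝ) ∈ hSet c g := ⟨p1, l, hl, rfl, hp1⟩
    have m2 : (((q - p1 - 1 : ℤ)):ℝ)/(l:ℝ) ∈ hSet c h := ⟨_, l, hl, rfl, key2⟩
    have le1 := le_csSup (hSet_bddAbove hc ⟨m, hm⟩) m1
    have le2 := le_csSup (hSet_bddAbove hc hh) m2
    have e2 : (q:ℝ)/(l:ℝ) = ((p1:ℝ))/(l:ℝ) + (((q - p1 - 1:ℤ)):ℝ)/(l:ℝ) + 1/(l:ℝ) := by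
      have hl0 : ((l:ℝ)) ≠ 0 := by positivity
      push_cast
      field_simp
      ring
    rw [e2]
    have : hFun c g = sSup (hSet c g) := rfl
    have : hFun c h = sSup (hSet c h) := rfl
    show _ + _ + _ ≤ sSup (hSet c g) + sSup (hSet c h) + 1/(l:ℝ)
    linarith [le1, le2]
  -- conclude
  apply csSup_le (hSet_nonempty hc (hBd_add hc hg hh))
  rintro x ⟨p, k, hk, rfl, hpk⟩
  -- show p/k ≤ ψg + ψh via ε-argument
  by_contra hgt
  push_neg at hgt
  set D := (p:ℝ)/(k:ℝ) - (hFun c g + hFun c h) with hD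
  have hD0 : 0 < D := by rw [hD]; linarith
  obtain ⟨n0, hn0'⟩ := exists_nat_gt (1 / (D * (k:ℝ)))
  set n := n0 + 1 with hndef
  have hngt : 1 / (D * (k:ℝ)) < (n:ℝ) := by
    have : (n0:ℝ) ≤ (n:ℝ) := by rw [hndef]; push_cast; linarith
    linarith
  have hn0 : 0 < n := Nat.succ_pos _
  have h1 : ((n:ℤ) * p) • c ≤ (n * k) • (g + h) := by
    have e1 : ((n:ℤ) * p) • c = n • (p • c) := by rw [mul_zsmul, natCast_zsmul]
    have e2 : (n * k) • (g+h) = n • (k • (g+h)) := (smul_smul n k (g+h)).symm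
    rw [e1, e2]
    exact nsmul_le_nsmul_right hpk n
  have h2 := claim ((n:ℤ) * p) (n * k) (by positivity) h1
  have hk0 : ((k:ℝ)) ≠ 0 := by positivity
  have hn0' : ((n:ℝ)) ≠ 0 := by positivity
  have e3 : (((n:ℤ) * p : ℤ):ℝ)/((n*k : ℕ):ℝ) = (p:ℝ)/(k:ℝ) := by
    push_cast
    field_simp
  rw [e3] at h2
  have h3 : 1/((n*k:ℕ):ℝ) < D := by
    have hkR : (0:ℝ) < (k:ℝ) := by positivity
    have hDk : (0:ℝ) < D * (k:ℝ) := by positivity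
    rw [div_lt_iff₀ hDk] at hngt
    rw [div_lt_iff₀ (by positivity : (0:ℝ) < ((n*k:ℕ):ℝ))]
    have hnn : (n:ℝ) = (n0:ℝ) + 1 := by rw [hndef]; push_cast; ring
    push_cast
    nlinarith [hnn, hngt]
  have : (p:ℝ)/(k:ℝ) < hFun c g + hFun c h + D := by
    calc (p:ℝ)/(k:ℝ) ≤ hFun c g + hFun c h + 1/((n*k:ℕ):ℝ) := h2
      _ < hFun c g + hFun c h + D := by linarith
  rw [hD] at this
  linarith

lemma hFun_add (hc : 0 < c) {g h : G} (hg : ∃ m : ℕ, |g| ≤ m • c) (hh : ∃ m : ℕ, |h| ≤ m • c) :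
    hFun c (g + h) = hFun c g + hFun c h :=
  le_antisymm (hFun_add_le hc hg hh) (hFun_add_ge hc hg hh)

lemma hFun_pos (hc : 0 < c) {g : G} (hg : ∃ m : ℕ, |g| ≤ m • c) (hk : ∃ k : ℕ, c ≤ k • g) :
    0 < hFun c g := by
  obtain ⟨k, hkc⟩ := hk
  have hk0 : 0 < k := by
    rcases Nat.eq_zero_or_pos k with h | h
    · subst h
      rw [zero_nsmul] at hkc
      exact absurd hkc (not_le.mpr hc)
    · exact h
  have hmem : (((1:ℤ)):ℝ)/(k:ℝ) ∈ hSet c g := ⟨1, k, hk0, rfl, by rwa [one_zsmul]⟩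
  have h1 : (((1:ℤ)):ℝ)/(k:ℝ) ≤ hFun c g := le_csSup (hSet_bddAbove hc hg) hmem
  have h2 : (0:ℝ) < 1/(k:ℝ) := by positivity
  have h3 : ((1:ℤ):ℝ) = (1:ℝ) := by norm_num
  rw [h3] at h1
  linarith

lemma hFun_nonpos_of_small (hc : 0 < c) {g : G} (hsm : ∀ k : ℕ, k • |g| ≤ c) : hFun c g ≤ 0 := by
  apply csSup_le (hSet_nonempty hc ⟨1, by have h9 := hsm 1; rw [one_nsmul] at h9; rwa [one_nsmul]⟩)
  rintro x ⟨p, k, hk, rfl, hpk⟩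
  have hp : p ≤ 0 := by
    by_contra hp'
    push_neg at hp'
    have h1 : c ≤ p • c := by
      calc c = (1:ℤ) • c := (one_zsmul c).symm
        _ ≤ p • c := zsmul_le_zsmul_left hc.le (by omega)
    have h4 : c ≤ k • |g| :=
      le_trans (le_trans h1 hpk) (nsmul_le_nsmul_right (le_abs_self g) k)
    have h5 : (2*k) • |g| ≤ c := hsm (2*k)
    have h6 : (2*k) • |g| = k • |g| + k • |g| := by rw [two_mul, add_nsmul]
    have h7 : c + c ≤ k•|g| + k•|g| := add_le_add h4 h4
    rw [← h6] at h7
    have h8 : c + c ≤ c := le_trans h7 h5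
    exact absurd (add_le_iff_nonpos_left.mp h8) (not_le.mpr hc)
  have hpr : (p:ℝ) ≤ 0 := by exact_mod_cast hp
  exact div_nonpos_of_nonpos_of_nonneg hpr (by positivity)

end MVGordan

end Functional
section Gordan

open Classical

namespace MVGordan

theorem exists_pos_addHom {G : Type*} [AddCommGroup G] [LinearOrder G] [IsOrderedAddMonoid G] :
    ∀ (n : ℕ) (S : Finset G), S.card ≤ n → ∃ φ : G →+ ℝ, ∀ g ∈ S, 0 < g → 0 < φ g := by
  intro n
  induction n with
  | zero =>
      intro S hS
      have hSe : S = ∅ := Finset.card_eq_zero.mp (Nat.le_zero.mp hS)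
      subst hSe
      exact ⟨0, by simp⟩
  | succ n ih =>
      intro S hS
      set c : G := ∑ g ∈ S, |g| with hcdef
      have hc0 : 0 ≤ c := Finset.sum_nonneg fun g _ => abs_nonneg g
      rcases eq_or_lt_of_le hc0 with hceq | hc
      · refine ⟨0, fun g hg hpos => ?_⟩
        have h1 : |g| ≤ c := Finset.single_le_sum (fun i _ => abs_nonneg i) hg
        rw [← hceq] at h1
        have h2 : g = 0 := abs_eq_zero.mp (le_antisymm h1 (abs_nonneg g))
        exact absurd h2 hpos.ne'
      · have hSB : ∀ g ∈ S, ∃ m : ℕ, |g| ≤ m • c :=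
          fun g hg => ⟨1, by
            rw [one_nsmul]; exact Finset.single_le_sum (fun i _ => abs_nonneg i) hg⟩
        set Nsm : Set G := {g | ∀ k : ℕ, k • |g| ≤ c} with hNdef
        have hNneg : ∀ g ∈ Nsm, -g ∈ Nsm := fun g hg k => by rw [abs_neg]; exact hg k
        have hNB : ∀ g ∈ Nsm, ∃ m : ℕ, |g| ≤ m • c := fun g hg =>
          ⟨1, by have h9 := hg 1; rw [one_nsmul] at h9; rwa [one_nsmul]⟩
        have hcN : c ∉ Nsm := by
          intro hcN
          have h5 := hcN 2
          rw [abs_of_pos hc, two_nsmul] at h5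
          exact absurd (add_le_iff_nonpos_left.mp h5) (not_le.mpr hc)
        have hNadd : ∀ g h : G, g ∈ Nsm → h ∈ Nsm → g + h ∈ Nsm := by
          intro g h hg hh k
          by_contra hlt
          push_neg at hlt
          have h6 : (2*k) • |g+h| ≤ (2*k) • |g| + (2*k) • |h| := by
            have := nsmul_le_nsmul_right (abs_add_le g h) (2*k)
            rwa [smul_add] at this
          have h7 : (2*k) • |g+h| = k • |g+h| + k • |g+h| := by
            rw [two_mul, add_nsmul]
          have h8 : c + c < k • |g+h| + k • |g+h| := add_lt_add hlt hlt
          have h9 : (2*k) • |g| + (2*k) • |h| ≤ c + c := add_le_add (hg _) (hh _)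
          rw [h7] at h6
          exact absurd (le_trans h6 h9) (not_le.mpr h8)
        have hNabs : ∀ g ∈ Nsm, |g| ∈ Nsm := fun g hg k => by rw [abs_abs]; exact hg k
        have hzeroN : (0:G) ∈ Nsm := fun k => by
          rw [abs_zero, smul_zero]; exact hc.le
        have hex : ∃ g ∈ S, g ∉ Nsm := by
          by_contra hall
          push_neg at hall
          apply hcN
          rw [hcdef]
          exact Finset.sum_induction _ (· ∈ Nsm) (fun a b ha hb => hNadd a b ha hb) hzeroN
            (fun g hg => hNabs g (hall g hg))
        obtain ⟨g0, hg0S, hg0N⟩ := hex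
        set S' := S.filter (fun g => g ∈ Nsm) with hS'def
        have hcard : S'.card ≤ n := by
          have hsub : S' ⊆ S := Finset.filter_subset _ _
          have hss : S' ⊂ S := (Finset.ssubset_iff_of_subset hsub).mpr
            ⟨g0, hg0S, by simp [hS'def, hg0N]⟩
          have := Finset.card_lt_card hss
          omega
        obtain ⟨φ2, hφ2⟩ := ih S' hcard
        set B : AddSubgroup G :=
          { carrier := {g | ∃ m : ℕ, |g| ≤ m • c}
            zero_mem' := ⟨0, by simp⟩
            neg_mem' := fun {g} hg => by
              obtain ⟨m, hm⟩ := hg; exact ⟨m, by rwa [abs_neg]⟩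
            add_mem' := fun {g h} hg hh => by
              obtain ⟨m1, h1⟩ := hg; obtain ⟨m2, h2⟩ := hh
              exact ⟨m1 + m2,
                le_trans (abs_add_le g h) (by rw [add_nsmul]; exact add_le_add h1 h2)⟩ }
          with hBdef
        have hmemB : ∀ b : B, ∃ m : ℕ, |(b : G)| ≤ m • c := fun b => b.2
        set F : B →+ ℝ := AddMonoidHom.mk' (fun b => hFun c (b : G)) (by
          intro a b
          show hFun c ((a + b : B) : G) = _
          rw [AddSubgroup.coe_add]
          exact hFun_add hc (hmemB a) (hmemB b)) with hFdef
        obtain ⟨φ1, hφ1⟩ := Module.Baer.extension_property_addMonoidHom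
          (Module.Baer.of_divisible (A := ℝ)) B.subtype Subtype.coe_injective F
        have hφ1B : ∀ b : B, φ1 (b : G) = hFun c (b : G) := by
          intro b
          have h5 := DFunLike.congr_fun hφ1 b
          exact h5
        have hφ1S : ∀ g ∈ S, φ1 g = hFun c g := fun g hg => hφ1B ⟨g, hSB g hg⟩
        have hφ1N : ∀ g ∈ Nsm, φ1 g = 0 := by
          intro g hg
          have h1 : hFun c g ≤ 0 := hFun_nonpos_of_small hc hg
          have h2 : hFun c (-g) ≤ 0 := hFun_nonpos_of_small hc (hNneg g hg)
          have h3 : hFun c g + hFun c (-g) = 0 := by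
            rw [← hFun_add hc (hNB g hg) (hNB _ (hNneg g hg)), add_neg_cancel, hFun_zero hc]
          have h4 : φ1 g = hFun c g := hφ1B ⟨g, hNB g hg⟩
          linarith
        have hposN : ∀ g ∈ S, 0 < g → g ∉ Nsm → 0 < φ1 g := by
          intro g hg hpos hgN
          rw [hφ1S g hg]
          apply hFun_pos hc (hSB g hg)
          have hgN' : ∃ k : ℕ, ¬ (k • |g| ≤ c) := by
            by_contra hall
            push_neg at hall
            exact hgN (fun k => hall k)
          obtain ⟨k, hk⟩ := hgN'
          push_neg at hk
          exact ⟨k, by rw [abs_of_pos hpos] at hk; exact hk.le⟩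
        set T := S.filter (fun g => 0 < g ∧ g ∉ Nsm) with hTdef
        have hTpos : ∀ g ∈ T, 0 < φ1 g := by
          intro g hgT
          rw [hTdef, Finset.mem_filter] at hgT
          exact hposN g hgT.1 hgT.2.1 hgT.2.2
        have heps : ∃ ε : ℝ, 0 < ε ∧ ∀ g ∈ T, ε * |φ2 g| < φ1 g := by
          rcases T.eq_empty_or_nonempty with hTe | hTne
          · refine ⟨1, one_pos, ?_⟩
            rw [hTe]; intro g hg; simp at hg
          · obtain ⟨g1, hg1T, hg1min⟩ :=
              T.exists_min_image (fun g => φ1 g / (1 + |φ2 g|)) hTne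
            have hg1pos := hTpos g1 hg1T
            refine ⟨(φ1 g1 / (1 + |φ2 g1|)) / 2, by positivity, ?_⟩
            intro g hgT
            have h1 := hg1min g hgT
            have h2 := hTpos g hgT
            have h3 : (0:ℝ) < 1 + |φ2 g| := by positivity
            have h5 : (φ1 g1 / (1 + |φ2 g1|)) / 2 * |φ2 g| ≤
                (φ1 g / (1 + |φ2 g|)) / 2 * |φ2 g| := by
              apply mul_le_mul_of_nonneg_right (by linarith) (abs_nonneg _)
            have h6 : (φ1 g / (1 + |φ2 g|)) / 2 * |φ2 g| < φ1 g := by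
              rw [div_div, div_mul_eq_mul_div, div_lt_iff₀ (by positivity)]
              have h7 : |φ2 g| < (1 + |φ2 g|) * 2 := by
                have := abs_nonneg (φ2 g); linarith
              exact mul_lt_mul_of_pos_left h7 h2
            linarith
        obtain ⟨ε, hε, hεT⟩ := heps
        refine ⟨AddMonoidHom.mk' (fun g => φ1 g + ε * φ2 g) (fun a b => by
          simp only [map_add]; ring), ?_⟩
        intro g hg hpos
        simp only [AddMonoidHom.mk'_apply]
        by_cases hgN : g ∈ Nsm
        · have h1 : φ1 g = 0 := hφ1N g hgN
          have h2 : 0 < φ2 g := hφ2 g (by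
            rw [hS'def, Finset.mem_filter]; exact ⟨hg, hgN⟩) hpos
          rw [h1, zero_add]
          exact mul_pos hε h2
        · have h1 := hposN g hg hpos hgN
          have h3 := hεT g (by rw [hTdef, Finset.mem_filter]; exact ⟨hg, hpos, hgN⟩)
          have h4 : -(ε * |φ2 g|) ≤ ε * φ2 g := by
            have h5 := neg_abs_le (φ2 g)
            nlinarith
          linarith

end MVGordan

end Gordan
section ChainPartial

open Classical

namespace MVStr

theorem chain_partial {C : Type*} (t : MVStr C) (lin : t.Linear) (h01 : t.zero ≠ t.one)
    (X : Finset C) {a b : C} (ha : a ∈ X) (hb : b ∈ X) (hab : a ≠ b) :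
    ∃ f : C → ↥(Set.Icc (0:ℝ) 1),
      f t.zero = stdMV.zero ∧
      (∀ x ∈ X, ∀ y ∈ X, t.oplus x y ∈ X → f (t.oplus x y) = stdMV.oplus (f x) (f y)) ∧
      (∀ x ∈ X, t.neg x ∈ X → f (t.neg x) = stdMV.neg (f x)) ∧
      f a ≠ f b := by
  classical
  letI : AddCommGroup (ChangC t) := t.changLO h01 lin
  letI : LinearOrder (ChangC t) := t.changLOrd lin
  haveI : IsOrderedAddMonoid (ChangC t) := t.changOrd h01 lin
  set ι : C → ChangC t := iota t h01 with hιdef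
  set u : ChangC t := iota t h01 t.one with hudef
  have hι0 : ι t.zero = 0 := iota_zero t h01
  have hlt : ∀ {x y : C}, t.le x y → x ≠ y → ι x < ι y := by
    intro x y hxy hne
    rw [lt_iff_le_and_ne]
    exact ⟨iota_le t h01 hxy, fun he => hne (iota_inj t h01 he)⟩
  have hposι : ∀ z : C, z ≠ t.zero → 0 < ι z := by
    intro z hz
    have h1 := hlt (t.zero_le z) (Ne.symm hz)
    rwa [hι0] at h1
  have hkey : ∀ x y : C, ι x + ι y = ι (t.oplus x y) + ι (t.ot x y) :=
    fun x y => iota_oplus t h01 lin x y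
  have hnegkey : ∀ x : C, ι x + ι (t.neg x) = u := fun x => iota_neg_add t h01 lin x
  set S : Finset (ChangC t) :=
    ((((X.image ι) ∪ {u}) ∪ (X.image (fun z => u - ι z))) ∪
      ((X ×ˢ X).image (fun p => ι p.1 - ι p.2))) ∪
      ((X ×ˢ X).image (fun p => ι p.1 + ι p.2 - u)) with hSdef
  have hmem1 : ∀ z ∈ X, ι z ∈ S := by
    intro z hz
    simp only [hSdef, Finset.mem_union]
    exact Or.inl (Or.inl (Or.inl (Or.inl (Finset.mem_image_of_mem _ hz))))
  have hmemu : u ∈ S := by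
    simp only [hSdef, Finset.mem_union]
    exact Or.inl (Or.inl (Or.inl (Or.inr (Finset.mem_singleton_self _))))
  have hmemc : ∀ z ∈ X, u - ι z ∈ S := by
    intro z hz
    simp only [hSdef, Finset.mem_union]
    exact Or.inl (Or.inl (Or.inr (Finset.mem_image_of_mem _ hz)))
  have hmemd : ∀ z1 ∈ X, ∀ z2 ∈ X, ι z1 - ι z2 ∈ S := by
    intro z1 h1 z2 h2
    simp only [hSdef, Finset.mem_union]
    exact Or.inl (Or.inr (Finset.mem_image_of_mem _ (Finset.mem_product.mpr (⟨h1, h2⟩ : (z1, z2).1 ∈ X ∧ (z1, z2).2 ∈ X))))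
  have hmeme : ∀ z1 ∈ X, ∀ z2 ∈ X, ι z1 + ι z2 - u ∈ S := by
    intro z1 h1 z2 h2
    simp only [hSdef, Finset.mem_union]
    exact Or.inr (Finset.mem_image_of_mem _ (Finset.mem_product.mpr (⟨h1, h2⟩ : (z1, z2).1 ∈ X ∧ (z1, z2).2 ∈ X)))
  obtain ⟨φ, hφ⟩ := MVGordan.exists_pos_addHom S.card S (Nat.le_refl _)
  have hupos : 0 < φ u := by
    apply hφ u hmemu
    have h1 := hlt (t.zero_le t.one) h01
    rwa [hι0] at h1
  have hφ0 : φ (ι t.zero) = 0 := by rw [hι0, map_zero]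
  have hφnonneg : ∀ z ∈ X, 0 ≤ φ (ι z) := by
    intro z hz
    by_cases h : z = t.zero
    · rw [h, hφ0]
    · exact (hφ _ (hmem1 z hz) (hposι z h)).le
  have hφle : ∀ z ∈ X, φ (ι z) ≤ φ u := by
    intro z hz
    by_cases h : z = t.one
    · rw [h]
    · have h1 : 0 < u - ι z := by
        rw [sub_pos]
        exact hlt (t.le_one z) h
      have h2 := hφ _ (hmemc z hz) h1
      rw [map_sub] at h2
      linarith
  set r : C → ℝ := fun z => φ (ι z) / φ u with hrdef
  have hr01 : ∀ z ∈ X, 0 ≤ r z ∧ r z ≤ 1 := by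
    intro z hz
    constructor
    · exact div_nonneg (hφnonneg z hz) hupos.le
    · rw [div_le_one hupos]
      exact hφle z hz
  set f : C → ↥(Set.Icc (0:ℝ) 1) := fun z =>
    ⟨max 0 (min (r z) 1), le_max_left _ _, max_le zero_le_one (min_le_right _ _)⟩
    with hfdef
  have hfr : ∀ z ∈ X, (f z : ℝ) = r z := by
    intro z hz
    obtain ⟨h0, h1⟩ := hr01 z hz
    show max 0 (min (r z) 1) = r z
    rw [min_eq_left h1, max_eq_right h0]
  have hr1 : r t.one = 1 := by
    rw [hrdef]
    exact div_self hupos.ne'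
  refine ⟨f, ?_, ?_, ?_, ?_⟩
  · apply Subtype.ext
    show max 0 (min (r t.zero) 1) = (0:ℝ)
    have : r t.zero = 0 := by rw [hrdef]; simp [hφ0]
    rw [this]
    simp
  · intro x hx y hy hxy
    apply Subtype.ext
    show (f (t.oplus x y) : ℝ) = min ((f x : ℝ) + (f y : ℝ)) 1
    rw [hfr _ hxy, hfr _ hx, hfr _ hy]
    by_cases h0 : t.ot x y = t.zero
    · have e1 : ι x + ι y = ι (t.oplus x y) := by
        rw [hkey x y, h0, hι0, add_zero]
      have e2 : r x + r y = r (t.oplus x y) := by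
        rw [hrdef]
        show φ (ι x)/φ u + φ (ι y)/φ u = φ (ι (t.oplus x y))/φ u
        rw [← add_div, ← map_add, e1]
      rw [← e2]
      exact (min_eq_left (by rw [e2]; exact (hr01 _ hxy).2)).symm
    · have hone : t.oplus x y = t.one := by
        by_contra hne
        exact h0 (t.chain_ot_zero lin hne)
      have e1 : ι x + ι y - u = ι (t.ot x y) := by
        rw [hkey x y, hone]
        show u + ι (t.ot x y) - u = ι (t.ot x y)
        exact add_sub_cancel_left u _
      have hpos2 : 0 < φ (ι x + ι y - u) := by
        apply hφ _ (hmeme x hx y hy)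
        rw [e1]
        exact hposι _ h0
      rw [map_sub, map_add] at hpos2
      have hsum : 1 < r x + r y := by
        rw [hrdef]
        show 1 < φ (ι x)/φ u + φ (ι y)/φ u
        rw [← add_div, lt_div_iff₀ hupos, one_mul]
        linarith
      rw [hone, hr1]
      exact (min_eq_right hsum.le).symm
  · intro x hx hnx
    apply Subtype.ext
    show (f (t.neg x) : ℝ) = 1 - (f x : ℝ)
    rw [hfr _ hnx, hfr _ hx]
    have e1 : φ (ι x) + φ (ι (t.neg x)) = φ u := by
      rw [← map_add, hnegkey x]
    rw [hrdef]
    show φ (ι (t.neg x))/φ u = 1 - φ (ι x)/φ u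
    field_simp
    linarith
  · have hsep : ∀ {x y : C}, x ∈ X → y ∈ X → t.le x y → x ≠ y → f x ≠ f y := by
      intro x y hx hy hxy hne
      have h1 : 0 < ι y - ι x := by rw [sub_pos]; exact hlt hxy hne
      have h2 := hφ _ (hmemd y hy x hx) h1
      rw [map_sub] at h2
      intro he
      have h3 : (f x : ℝ) = (f y : ℝ) := by rw [he]
      rw [hfr _ hx, hfr _ hy] at h3
      rw [hrdef] at h3
      have hu0 : φ u ≠ 0 := hupos.ne'
      have h4 : φ (ι x) = φ (ι y) := by
        field_simp [hu0] at h3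
        exact h3
      linarith
    rcases lin a b with h | h
    · exact hsep ha hb h hab
    · exact fun he => hsep hb ha h (Ne.symm hab) he.symm

theorem key_finite {M : Type*} (s : MVStr M) {a b : M} (hab : a ≠ b) (X : Finset M)
    (ha : a ∈ X) (hb : b ∈ X) :
    ∃ f : M → ↥(Set.Icc (0:ℝ) 1),
      f s.zero = stdMV.zero ∧
      (∀ x ∈ X, ∀ y ∈ X, s.oplus x y ∈ X → f (s.oplus x y) = stdMV.oplus (f x) (f y)) ∧
      (∀ x ∈ X, s.neg x ∈ X → f (s.neg x) = stdMV.neg (f x)) ∧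
      f a ≠ f b := by
  classical
  obtain ⟨P, hP, hdP, hprime⟩ := s.exists_prime (s.dd_ne_zero hab)
  have hone : s.one ∉ P := s.one_not_mem hP hdP
  have lin := s.qMV_linear hP hprime
  have h01 : (s.qMV P hP).zero ≠ (s.qMV P hP).one := s.qMV_ne_zero_one hP hone
  have hmem : ∀ x ∈ X, Quotient.mk (s.qSetoid P hP) x ∈
      X.image (Quotient.mk (s.qSetoid P hP)) := fun x hx => Finset.mem_image_of_mem _ hx
  obtain ⟨fc, hf0, hfop, hfneg, hfsep⟩ := chain_partial (s.qMV P hP) lin h01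
    (X.image (Quotient.mk (s.qSetoid P hP))) (hmem a ha) (hmem b hb) (s.qMV_sep hP hdP)
  refine ⟨fun m => fc (Quotient.mk _ m), hf0, ?_, ?_, hfsep⟩
  · intro x hx y hy hxy
    show fc (Quotient.mk (s.qSetoid P hP) (s.oplus x y)) = _
    rw [← s.qMV_mk_oplus hP x y]
    exact hfop _ (hmem x hx) _ (hmem y hy) (by rw [s.qMV_mk_oplus hP x y]; exact hmem _ hxy)
  · intro x hx hnx
    show fc (Quotient.mk (s.qSetoid P hP) (s.neg x)) = _
    rw [← s.qMV_mk_neg hP x]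
    exact hfneg _ (hmem x hx) (by rw [s.qMV_mk_neg hP x]; exact hmem _ hnx)

end MVStr

end ChainPartial
universe u

/-- Di Nola's representation theorem: every MV-algebra embeds into a
product of ultrapowers of the standard MV-algebra `[0,1]`. -/
theorem di_nola_representation {M : Type u} (s : MVStr M) :
    ∃ (J : Type u) (If : J → Type u) (U : ∀ j, Ultrafilter (If j))
      (f : M → ∀ j, MVUltra (fun _ : If j => ↥(Set.Icc (0 : ℝ) 1)) (U j)),
      IsMVHom s (piMV fun j => ultraMV (fun _ : If j => stdMV) (U j)) f ∧
      Function.Injective f := by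
  classical
  have hchoice : ∀ (j : {p : M × M // p.1 ≠ p.2}) (Y : Finset M),
      ∃ f : M → ↥(Set.Icc (0:ℝ) 1),
        f s.zero = stdMV.zero ∧
        (∀ x ∈ Y ∪ {j.1.1, j.1.2}, ∀ y ∈ Y ∪ {j.1.1, j.1.2},
          s.oplus x y ∈ Y ∪ {j.1.1, j.1.2} →
          f (s.oplus x y) = stdMV.oplus (f x) (f y)) ∧
        (∀ x ∈ Y ∪ {j.1.1, j.1.2}, s.neg x ∈ Y ∪ {j.1.1, j.1.2} →
          f (s.neg x) = stdMV.neg (f x)) ∧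
        f j.1.1 ≠ f j.1.2 := by
    intro j Y
    exact s.key_finite j.2 (Y ∪ {j.1.1, j.1.2}) (by simp) (by simp)
  choose F hF0 hFop hFneg hFsep using hchoice
  have hUle : ∀ t : Set (Finset M), t ∈ (Filter.atTop : Filter (Finset M)) →
      t ∈ (Ultrafilter.of (Filter.atTop : Filter (Finset M)) : Filter (Finset M)) :=
    fun t ht => Ultrafilter.of_le _ ht
  refine ⟨{p : M × M // p.1 ≠ p.2}, fun _ => Finset M,
    fun _ => Ultrafilter.of Filter.atTop,
    fun m j => Quotient.mk (mvSetoid (fun _ : Finset M => ↥(Set.Icc (0:ℝ) 1))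
      (Ultrafilter.of Filter.atTop)) (fun Y => F j Y m), ⟨?_, ?_, ?_⟩, ?_⟩
  · intro x y
    funext j
    apply Quotient.sound
    show {Y : Finset M | F j Y (s.oplus x y) = stdMV.oplus (F j Y x) (F j Y y)} ∈ _
    have hZ : {Y : Finset M | ({x, y, s.oplus x y} : Finset M) ≤ Y} ∈
        (Ultrafilter.of (Filter.atTop : Filter (Finset M)) : Filter (Finset M)) :=
      hUle _ (Filter.mem_atTop _)
    refine Filter.mem_of_superset hZ ?_
    intro Y hY
    simp only [Set.mem_setOf_eq] at hY ⊢
    have hx : x ∈ Y ∪ {j.1.1, j.1.2} :=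
      Finset.mem_union_left _ (hY (by simp))
    have hy : y ∈ Y ∪ {j.1.1, j.1.2} :=
      Finset.mem_union_left _ (hY (by simp))
    have hxy : s.oplus x y ∈ Y ∪ {j.1.1, j.1.2} :=
      Finset.mem_union_left _ (hY (by simp))
    exact hFop j Y x hx y hy hxy
  · intro x
    funext j
    apply Quotient.sound
    show {Y : Finset M | F j Y (s.neg x) = stdMV.neg (F j Y x)} ∈ _
    have hZ : {Y : Finset M | ({x, s.neg x} : Finset M) ≤ Y} ∈
        (Ultrafilter.of (Filter.atTop : Filter (Finset M)) : Filter (Finset M)) :=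
      hUle _ (Filter.mem_atTop _)
    refine Filter.mem_of_superset hZ ?_
    intro Y hY
    simp only [Set.mem_setOf_eq] at hY ⊢
    have hx : x ∈ Y ∪ {j.1.1, j.1.2} :=
      Finset.mem_union_left _ (hY (by simp))
    have hnx : s.neg x ∈ Y ∪ {j.1.1, j.1.2} :=
      Finset.mem_union_left _ (hY (by simp))
    exact hFneg j Y x hx hnx
  · funext j
    exact congrArg (Quotient.mk _) (funext fun Y => hF0 j Y)
  · intro m m' he
    by_contra hne
    have h1 := congrFun he (⟨(m, m'), hne⟩ : {p : M × M // p.1 ≠ p.2})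
    have h2 := Quotient.exact h1
    have h3 : {Y : Finset M | F ⟨(m, m'), hne⟩ Y m = F ⟨(m, m'), hne⟩ Y m'} = ∅ := by
      ext Y
      simp only [Set.mem_setOf_eq, Set.mem_empty_iff_false, iff_false]
      exact hFsep ⟨(m, m'), hne⟩ Y
    have h4 : {Y : Finset M | F ⟨(m, m'), hne⟩ Y m = F ⟨(m, m'), hne⟩ Y m'} ∈
        (Ultrafilter.of (Filter.atTop : Filter (Finset M)) : Filter (Finset M)) := h2
    rw [h3] at h4
    exact Filter.empty_notMem _ h4
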